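/- arXiv:2107.12941 — 8 statements merged into one kernel-verified Lean document; each statement's English description precedes it below -/
import Mathlib

section
/- Let d ∈ ℕ and let f : 𝔻 → 𝔹_d satisfy f(0) = 0 and be Lipschitz from the Dirichlet metric to the pseudohyperbolic metric, i.e. there is L < ∞ with ρ(f(z), f(w)) ≤ L·δ(z,w) for all z,w ∈ 𝔻. Then there exists a constant C ∈ (0,∞) such that ‖f(z)‖ ≤ 1 − exp(−C·(log(1/(1−|z|)))^{1/2}) for all z ∈ 𝔻. -/
open Complex Metric

/-- The reproducing kernel of the Dirichlet space. -/
noncomputable def dirK (z w : ℂ) : ℂ :=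
  if z * (starRingEnd ℂ) w = 0 then 1
  else (1 / (z * (starRingEnd ℂ) w)) * Complex.log (1 / (1 - z * (starRingEnd ℂ) w))

/-- The metric on the disc induced by the Dirichlet space. -/
noncomputable def dirDelta (z w : ℂ) : ℝ :=
  Real.sqrt (1 - ‖dirK z w‖ ^ 2 / ((dirK z z).re * (dirK w w).re))

/-- The pseudohyperbolic metric on the unit ball of `ℂ^d`. -/
noncomputable def pseudoHyp {d : ℕ} (z w : EuclideanSpace ℂ (Fin d)) : ℝ :=
  Real.sqrt (1 - (1 - ‖z‖ ^ 2) * (1 - ‖w‖ ^ 2) / ‖1 - (inner ℂ w z : ℂ)‖ ^ 2)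



noncomputable def KK (t : ℝ) : ℝ := Real.log (1 - t)⁻¹ / t

noncomputable def phiD (t : ℝ) : ℝ := Real.log (KK t)

lemma le_log_inv {t : ℝ} (h0 : 0 ≤ t) (h1 : t < 1) : t ≤ Real.log (1 - t)⁻¹ := by
  have h : (1 : ℝ) - t ≤ Real.exp (-t) := by nlinarith [Real.add_one_le_exp (-t)]
  have h2 : Real.log (1 - t) ≤ -t := by
    calc Real.log (1 - t) ≤ Real.log (Real.exp (-t)) := by
          apply Real.log_le_log (by linarith) h
      _ = -t := Real.log_exp _
  rw [Real.log_inv]; linarith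

lemma lt_log_inv {t : ℝ} (h0 : 0 < t) (h1 : t < 1) : t < Real.log (1 - t)⁻¹ := by
  have h : (1 : ℝ) - t < Real.exp (-t) := by
    have := Real.add_one_lt_exp (x := -t) (by intro h; apply absurd h; simp [h0.ne'])
    linarith
  have h2 : Real.log (1 - t) < -t := by
    calc Real.log (1 - t) < Real.log (Real.exp (-t)) := Real.log_lt_log (by linarith) h
      _ = -t := Real.log_exp _
  rw [Real.log_inv]; linarith

lemma log_inv_le {t : ℝ} (h0 : 0 ≤ t) (h1 : t < 1) : Real.log (1 - t)⁻¹ ≤ t / (1 - t) := by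
  have h : (0:ℝ) < 1 - t := by linarith
  have h2 := Real.log_le_sub_one_of_pos (x := (1 - t)⁻¹) (by positivity)
  have h3 : (1 - t)⁻¹ - 1 = t / (1 - t) := by field_simp; ring
  linarith

lemma one_le_KK {t : ℝ} (h0 : 0 < t) (h1 : t < 1) : 1 ≤ KK t := by
  rw [KK, le_div_iff₀ h0, one_mul]
  exact le_log_inv h0.le h1

lemma one_lt_KK {t : ℝ} (h0 : 0 < t) (h1 : t < 1) : 1 < KK t := by
  rw [KK, lt_div_iff₀ h0, one_mul]
  exact lt_log_inv h0 h1

lemma KK_pos {t : ℝ} (h0 : 0 < t) (h1 : t < 1) : 0 < KK t :=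
  lt_of_lt_of_le one_pos (one_le_KK h0 h1)

lemma phiD_pos {t : ℝ} (h0 : 0 < t) (h1 : t < 1) : 0 < phiD t :=
  Real.log_pos (one_lt_KK h0 h1)

lemma KK_mono {a b : ℝ} (ha : 0 < a) (hab : a ≤ b) (hb : b < 1) : KK a ≤ KK b := by
  have hb0 : 0 < b := lt_of_lt_of_le ha hab
  have h1b : (0:ℝ) < 1 - b := by linarith
  have h1a : (0:ℝ) < 1 - a := by linarith
  have hw1 : (0:ℝ) ≤ a / b := (div_pos ha hb0).le
  have hw2 : (0:ℝ) ≤ 1 - a / b := by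
    have : a / b ≤ 1 := (div_le_one hb0).mpr hab
    linarith
  have hcon := (strictConcaveOn_log_Ioi.concaveOn).2 (Set.mem_Ioi.2 h1b)
      (Set.mem_Ioi.2 (one_pos (α := ℝ))) hw1 hw2 (by ring)
  simp only [smul_eq_mul, Real.log_one, mul_one] at hcon
  have hpt : a / b * (1 - b) + (1 - a / b) = 1 - a := by field_simp; ring
  rw [hpt] at hcon
  -- hcon : a/b * log (1-b) + (1 - a/b) * log 1 ≤ log (1-a)  (log 1 part simp'd)
  have h2 : a * Real.log (1 - b) ≤ b * Real.log (1 - a) := by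
    calc a * Real.log (1 - b) = b * (a / b * Real.log (1 - b)) := by field_simp
      _ ≤ b * Real.log (1 - a) := by nlinarith
  rw [KK, KK, div_le_div_iff₀ ha hb0, Real.log_inv, Real.log_inv]
  nlinarith

lemma phiD_mono {a b : ℝ} (ha : 0 < a) (hab : a ≤ b) (hb : b < 1) : phiD a ≤ phiD b :=
  Real.log_le_log (KK_pos ha (lt_of_le_of_lt hab hb)) (KK_mono ha hab hb)

lemma one_sub_le_neg_log {x : ℝ} (hx : 0 < x) : 1 - x ≤ -Real.log x := by
  have := Real.log_le_sub_one_of_pos hx; linarith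

lemma phiD_le {t : ℝ} (h0 : 0 < t) (h1 : t ≤ 1/2) : phiD t ≤ 2 * t := by
  have ht1 : t < 1 := by linarith
  have hK : KK t ≤ (1 - t)⁻¹ := by
    rw [KK, div_le_iff₀ h0]
    have := log_inv_le h0.le ht1
    calc Real.log (1 - t)⁻¹ ≤ t / (1 - t) := this
      _ = (1 - t)⁻¹ * t := by field_simp
  have h2 : phiD t ≤ KK t - 1 := by
    have := Real.log_le_sub_one_of_pos (KK_pos h0 ht1)
    exact this
  have h3 : (1 - t)⁻¹ - 1 ≤ 2 * t := by
    rw [inv_eq_one_div]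
    rw [div_sub' (by linarith : (1:ℝ) - t ≠ 0)]
    rw [div_le_iff₀ (by linarith : (0:ℝ) < 1 - t)]
    nlinarith
  linarith

lemma phiD_contOn {a b : ℝ} (ha : 0 < a) (hb : b < 1) :
    ContinuousOn phiD (Set.Icc a b) := by
  have hsub : ∀ x ∈ Set.Icc a b, 0 < x ∧ x < 1 := by
    intro x hx; exact ⟨lt_of_lt_of_le ha hx.1, lt_of_le_of_lt hx.2 hb⟩
  have hKK : ContinuousOn KK (Set.Icc a b) := by
    apply ContinuousOn.div
    · apply ContinuousOn.log
      · apply ContinuousOn.inv₀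
        · fun_prop
        · intro x hx; have := hsub x hx; intro hc; linarith [this.2]
      · intro x hx
        obtain ⟨hx0, hx1⟩ := hsub x hx
        have hx2 : (0:ℝ) < 1 - x := by linarith
        positivity
    · fun_prop
    · intro x hx; exact (hsub x hx).1.ne'
  apply ContinuousOn.log hKK
  intro x hx
  exact (KK_pos (hsub x hx).1 (hsub x hx).2).ne'

lemma KK_nonneg {t : ℝ} (h0 : 0 < t) (h1 : t < 1) : 0 ≤ KK t :=
  le_trans zero_le_one (one_le_KK h0 h1)

lemma dirK_real (z w : ℂ) (x : ℝ) (hx0 : 0 < x) (hx1 : x < 1)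
    (h : z * (starRingEnd ℂ) w = (x : ℂ)) : dirK z w = ((KK x : ℝ) : ℂ) := by
  rw [dirK, h, if_neg (by exact_mod_cast hx0.ne')]
  have hpos : (0:ℝ) < 1 - x := by linarith
  have h1 : (1 : ℂ) - (x : ℂ) = ((1 - x : ℝ) : ℂ) := by push_cast; ring
  rw [h1, show (1:ℂ)/(((1 - x : ℝ)) : ℂ) = (((1 - x : ℝ)⁻¹ : ℝ) : ℂ) by push_cast; ring,
    ← Complex.ofReal_log (by positivity : (0:ℝ) ≤ (1 - x)⁻¹)]
  rw [KK]
  push_cast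
  ring

lemma mul_conj_abs (z : ℂ) : z * (starRingEnd ℂ) z = ((‖z‖ ^ 2 : ℝ) : ℂ) := by
  rw [Complex.mul_conj]
  norm_cast
  exact (Complex.sq_norm z).symm

lemma dirDelta_eq (z : ℂ) (c : ℝ) (hz : z ≠ 0) (h1 : ‖z‖ < 1)
    (hc0 : 0 < c) (hc1 : c ≤ 1) :
    dirDelta z ((c : ℂ) * z) =
      Real.sqrt (1 - KK (c * ‖z‖ ^ 2) ^ 2 /
        (KK (‖z‖ ^ 2) * KK (c ^ 2 * ‖z‖ ^ 2))) := by
  set R := ‖z‖ with hR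
  have hR0 : 0 < R := norm_pos_iff.mpr hz
  have hu1 : R ^ 2 < 1 := by nlinarith
  have hx1 : (0:ℝ) < c * R ^ 2 := by positivity
  have hx1' : c * R ^ 2 < 1 := by nlinarith
  have hx3 : (0:ℝ) < c ^ 2 * R ^ 2 := by positivity
  have hx3' : c ^ 2 * R ^ 2 < 1 := by nlinarith
  have k1 : dirK z ((c : ℂ) * z) = ((KK (c * R ^ 2) : ℝ) : ℂ) := by
    apply dirK_real _ _ _ hx1 hx1'
    rw [map_mul, Complex.conj_ofReal, show z * ((c:ℂ) * (starRingEnd ℂ) z)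
      = (c:ℂ) * (z * (starRingEnd ℂ) z) by ring, mul_conj_abs]
    push_cast; ring
  have k2 : dirK z z = ((KK (R ^ 2) : ℝ) : ℂ) := by
    apply dirK_real _ _ _ (by positivity) hu1 (mul_conj_abs z)
  have k3 : dirK ((c : ℂ) * z) ((c : ℂ) * z) = ((KK (c ^ 2 * R ^ 2) : ℝ) : ℂ) := by
    apply dirK_real _ _ _ hx3 hx3'
    rw [map_mul, Complex.conj_ofReal, show (c:ℂ) * z * ((c:ℂ) * (starRingEnd ℂ) z)
      = (c:ℂ) * (c:ℂ) * (z * (starRingEnd ℂ) z) by ring, mul_conj_abs]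
    push_cast; ring
  rw [dirDelta, k1, k2, k3, Complex.norm_real, Real.norm_eq_abs, Complex.ofReal_re, Complex.ofReal_re,
    _root_.abs_of_nonneg (KK_nonneg hx1 hx1')]

lemma dirDelta_zero (z : ℂ) (hz : z ≠ 0) (h1 : ‖z‖ < 1) :
    dirDelta z 0 = Real.sqrt (1 - 1 / KK (‖z‖ ^ 2)) := by
  have hR0 : 0 < ‖z‖ := norm_pos_iff.mpr hz
  have h00 : dirK z 0 = 1 := by rw [dirK]; simp
  have h0' : dirK (0:ℂ) 0 = 1 := by rw [dirK]; simp
  have hzz : dirK z z = ((KK (‖z‖ ^ 2) : ℝ) : ℂ) :=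
    dirK_real _ _ _ (by positivity) (by nlinarith) (mul_conj_abs z)
  rw [dirDelta, h00, h0', hzz, Complex.ofReal_re, Complex.one_re]
  norm_num

lemma pseudoHyp_zero {d : ℕ} (a : EuclideanSpace ℂ (Fin d)) :
    pseudoHyp a 0 = ‖a‖ := by
  rw [pseudoHyp]
  have h1 : (1:ℝ) - (1 - ‖a‖ ^ 2) * (1 - ‖(0 : EuclideanSpace ℂ (Fin d))‖ ^ 2) /
      ‖1 - (inner ℂ (0 : EuclideanSpace ℂ (Fin d)) a : ℂ)‖ ^ 2 = ‖a‖ ^ 2 := by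
    simp [inner_zero_left]
  rw [h1]
  exact Real.sqrt_sq (norm_nonneg a)

lemma pseudo_step {d : ℕ} {a b : EuclideanSpace ℂ (Fin d)} (ha : ‖a‖ < 1) (hb : ‖b‖ < 1)
    (h : pseudoHyp a b ≤ 1 / 2) : (3 / 16 : ℝ) * (1 - ‖b‖) ≤ 1 - ‖a‖ := by
  have hi : ‖(inner ℂ b a : ℂ)‖ ≤ ‖b‖ * ‖a‖ := by
    simpa using norm_inner_le_norm (𝕜 := ℂ) b a
  have hi2 : ‖(inner ℂ b a : ℂ)‖ ≤ ‖b‖ := by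
    calc ‖(inner ℂ b a : ℂ)‖ ≤ ‖b‖ * ‖a‖ := hi
      _ ≤ ‖b‖ * 1 := mul_le_mul_of_nonneg_left ha.le (norm_nonneg b)
      _ = ‖b‖ := mul_one _
  have hDlb : 1 - ‖b‖ ≤ ‖1 - (inner ℂ b a : ℂ)‖ := by
    have h1 : ‖(1:ℂ)‖ - ‖(inner ℂ b a : ℂ)‖ ≤ ‖1 - (inner ℂ b a : ℂ)‖ := norm_sub_norm_le _ _
    simp only [norm_one] at h1
    linarith
  have hDpos : (0:ℝ) < ‖1 - (inner ℂ b a : ℂ)‖ := lt_of_lt_of_le (by linarith) hDlb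
  have hD2 : (0:ℝ) < ‖1 - (inner ℂ b a : ℂ)‖ ^ 2 := by positivity
  have hQ : 1 - (1 - ‖a‖ ^ 2) * (1 - ‖b‖ ^ 2) / ‖1 - (inner ℂ b a : ℂ)‖ ^ 2
      ≤ 1 / 4 := by
    by_contra hq
    push_neg at hq
    have h2 : (1:ℝ)/2 < Real.sqrt (1 - (1 - ‖a‖ ^ 2) * (1 - ‖b‖ ^ 2) /
        ‖1 - (inner ℂ b a : ℂ)‖ ^ 2) := by
      rw [show (1:ℝ)/2 = Real.sqrt (1/4) by
        rw [show (1:ℝ)/4 = (1/2)^2 by norm_num, Real.sqrt_sq (by norm_num)]]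
      exact Real.sqrt_lt_sqrt (by norm_num) hq
    rw [pseudoHyp] at h
    linarith
  have hkey : (3/4 : ℝ) * ‖1 - (inner ℂ b a : ℂ)‖ ^ 2
      ≤ (1 - ‖a‖ ^ 2) * (1 - ‖b‖ ^ 2) :=
    (le_div_iff₀ hD2).mp (by linarith)
  have hD2lb : (1 - ‖b‖) ^ 2 ≤ ‖1 - (inner ℂ b a : ℂ)‖ ^ 2 :=
    pow_le_pow_left₀ (by linarith) hDlb 2
  have hkey2 : (3/4 : ℝ) * (1 - ‖b‖) ^ 2 ≤ (1 - ‖a‖ ^ 2) * (1 - ‖b‖ ^ 2) := by nlinarith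
  have hx' : (0:ℝ) ≤ 1 - ‖a‖ := by linarith
  have hy' : (0:ℝ) ≤ 1 - ‖b‖ := by linarith
  have h4 : (0:ℝ) ≤ 4 - (1 + ‖a‖) * (1 + ‖b‖) := by
    nlinarith [norm_nonneg a, norm_nonneg b]
  have e1 : (1 - ‖a‖ ^ 2) * (1 - ‖b‖ ^ 2) ≤ 4 * (1 - ‖a‖) * (1 - ‖b‖) := by
    nlinarith [mul_nonneg (mul_nonneg hx' hy') h4]
  have e2 : (3/4 : ℝ) * (1 - ‖b‖) ^ 2 ≤ 4 * (1 - ‖a‖) * (1 - ‖b‖) := le_trans hkey2 e1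
  nlinarith [e2, sub_pos.2 hb]

lemma dirDelta_nonneg (z w : ℂ) : 0 ≤ dirDelta z w := Real.sqrt_nonneg _

lemma sqrt_two_le : Real.sqrt 2 ≤ 3/2 := by
  rw [show (3:ℝ)/2 = Real.sqrt ((3/2)^2) by rw [Real.sqrt_sq (by norm_num)]]
  apply Real.sqrt_le_sqrt; norm_num

lemma exp_neg_two_le : Real.exp (-2 : ℝ) ≤ 3/16 := by
  have h1 : (2.7182818283:ℝ) < Real.exp 1 := Real.exp_one_gt_d9
  have h2 : Real.exp (-2 : ℝ) = (Real.exp 1 * Real.exp 1)⁻¹ := by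
    rw [← Real.exp_add, ← Real.exp_neg]; norm_num
  have h3 : (16/3:ℝ) ≤ Real.exp 1 * Real.exp 1 := by nlinarith
  rw [h2]
  calc (Real.exp 1 * Real.exp 1)⁻¹ ≤ ((16:ℝ)/3)⁻¹ := inv_anti₀ (by norm_num) h3
    _ ≤ 3/16 := by norm_num

lemma caseA_key {A s q : ℝ} (hA : 1 ≤ A) (hs : 0 ≤ s) (hq : 0 ≤ q) (hq2 : q ≤ 3/2)
    (hss : 4 * A * (s * s) ≤ s) : A * (q * s) * (1 + 60 * A ^ 3 * s) ≤ 60 * A ^ 3 * s := by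
  have c1 : A ^ 3 * (4 * A * (s * s)) ≤ A ^ 3 * s :=
    mul_le_mul_of_nonneg_left hss (by positivity)
  nlinarith [c1, mul_nonneg hs hs, mul_nonneg (mul_nonneg (by linarith : (0:ℝ) ≤ A) hs) hs,
    mul_nonneg (by linarith : (0:ℝ) ≤ A) hs, sq_nonneg (A - 1), sq_nonneg s,
    mul_nonneg (mul_nonneg (pow_nonneg (by linarith : (0:ℝ) ≤ A) 3) hs) hs,
    mul_nonneg (pow_nonneg (by linarith : (0:ℝ) ≤ A) 3) hs]

lemma caseB_key {A s p nn : ℝ} (hA : 1 ≤ A) (hs : 0 ≤ s) (h4 : 1 ≤ 4 * A * s)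
    (hp : 0 ≤ p) (hpb : p ≤ 2 * s + 1) (hn : nn < p * (4 * A ^ 2) + 1) :
    2 * nn ≤ 60 * A ^ 3 * s := by
  have b1 : p * (4 * A ^ 2) ≤ (2 * s + 1) * (4 * A ^ 2) :=
    mul_le_mul_of_nonneg_right hpb (by positivity)
  have b2 : 8 * A ^ 2 ≤ 8 * A ^ 2 * (4 * A * s) :=
    le_mul_of_one_le_right (by positivity) h4
  have b3 : (2:ℝ) ≤ 2 * (4 * A * s) := le_mul_of_one_le_right (by norm_num) h4
  have b4 : 0 ≤ A ^ 2 * (A - 1) * s :=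
    mul_nonneg (mul_nonneg (by positivity) (by linarith)) hs
  have b5 : 0 ≤ (A ^ 3 - A) * s := mul_nonneg (by nlinarith) hs
  have b6 : (0:ℝ) ≤ 4 * A ^ 3 * s := by positivity
  nlinarith [b1, b2, b3, b4, b5, b6]

lemma abs_lt_one_of_mem {z : ℂ} (hz : z ∈ ball (0 : ℂ) 1) : ‖z‖ < 1 := by
  simpa using mem_ball_zero_iff.1 hz

lemma chain_bound {d : ℕ} (f : ℂ → EuclideanSpace ℂ (Fin d)) (L : ℝ) (hL : 1 ≤ L)
    (hmap : ∀ z ∈ ball (0 : ℂ) 1, ‖f z‖ < 1) (h0 : f 0 = 0)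
    (hLip : ∀ z ∈ ball (0 : ℂ) 1, ∀ w ∈ ball (0 : ℂ) 1,
      pseudoHyp (f z) (f w) ≤ L * dirDelta z w) :
    ∀ n : ℕ, ∀ z ∈ ball (0 : ℂ) 1,
      phiD (‖z‖ ^ 2) ≤ n / (4 * L ^ 2) → (3 / 16 : ℝ) ^ n ≤ 1 - ‖f z‖ := by
  have hL0 : (0:ℝ) < L := lt_of_lt_of_le one_pos hL
  intro n
  induction n with
  | zero =>
    intro z hz hphi
    rcases eq_or_ne z 0 with rfl | hz0
    · simp [h0]
    · exfalso
      have hR1 : ‖z‖ < 1 := abs_lt_one_of_mem hz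
      have hR0 : 0 < ‖z‖ := norm_pos_iff.mpr hz0
      have := phiD_pos (t := ‖z‖ ^ 2) (by positivity) (by nlinarith)
      simp only [Nat.cast_zero, zero_div] at hphi
      linarith
  | succ n ih =>
    intro z hz hphi
    rcases eq_or_ne z 0 with rfl | hz0
    · have : ‖f 0‖ = 0 := by rw [h0, norm_zero]
      rw [this]
      norm_num
      exact pow_le_one₀ (by norm_num) (by norm_num)
    have hR1 : ‖z‖ < 1 := abs_lt_one_of_mem hz
    have hR0 : 0 < ‖z‖ := norm_pos_iff.mpr hz0
    set R := ‖z‖ with hRdef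
    set u := R ^ 2 with hudef
    have hu0 : 0 < u := by positivity
    have hu1 : u < 1 := by nlinarith
    by_cases hprev : phiD u ≤ n / (4 * L ^ 2)
    · have := ih z hz hprev
      calc (3/16 : ℝ) ^ (n+1) ≤ (3/16 : ℝ) ^ n := by
            apply pow_le_pow_of_le_one (by norm_num) (by norm_num) (by omega)
        _ ≤ 1 - ‖f z‖ := this
    push_neg at hprev
    rcases Nat.eq_zero_or_pos n with rfl | hn1
    · -- single step from 0
      have hphi1 : phiD u ≤ 1 / (4 * L ^ 2) := by
        have : ((0:ℕ) + 1 : ℕ) = (1:ℕ) := rfl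
        simpa using hphi
      have hstep := hLip z hz 0 (mem_ball_self one_pos)
      rw [h0, pseudoHyp_zero, dirDelta_zero z hz0 hR1] at hstep
      have hKpos : 0 < KK u := KK_pos hu0 hu1
      have harg : 1 - 1 / KK u ≤ 1 / (4 * L ^ 2) := by
        have h1 : 1 - 1 / KK u ≤ phiD u := by
          have := one_sub_le_neg_log (x := (KK u)⁻¹) (by positivity)
          rw [Real.log_inv] at this
          rw [phiD]
          rw [one_div]
          linarith
        linarith
      have hsq : Real.sqrt (1 - 1 / KK u) ≤ 1 / (2 * L) := by
        calc Real.sqrt (1 - 1 / KK u) ≤ Real.sqrt (1 / (4 * L ^ 2)) :=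
              Real.sqrt_le_sqrt harg
          _ = 1 / (2 * L) := by
              rw [show (1:ℝ) / (4 * L ^ 2) = (1 / (2 * L)) ^ 2 by field_simp; ring,
                Real.sqrt_sq (by positivity)]
      have hfz : ‖f z‖ ≤ 1 / 2 := by
        calc ‖f z‖ ≤ L * Real.sqrt (1 - 1 / KK u) := hstep
          _ ≤ L * (1 / (2 * L)) := mul_le_mul_of_nonneg_left hsq hL0.le
          _ = 1 / 2 := by field_simp; try ring
      calc (3/16 : ℝ) ^ (0+1) = 3/16 := by norm_num
        _ ≤ 1 - ‖f z‖ := by linarith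
    · -- n ≥ 1 : find intermediate point via IVT
      have hne : (0:ℝ) < n / (4 * L ^ 2) := by positivity
      set a := min (n / (4 * L ^ 2) / 2) (1/2) with hadef
      have ha0 : 0 < a := by positivity
      have ha12 : a ≤ 1/2 := min_le_right _ _
      have haval : phiD a ≤ n / (4 * L ^ 2) := by
        calc phiD a ≤ 2 * a := phiD_le ha0 ha12
          _ ≤ 2 * (n / (4 * L ^ 2) / 2) := by
              apply mul_le_mul_of_nonneg_left (min_le_left _ _) (by norm_num)
          _ = n / (4 * L ^ 2) := by ring
      have hau : a ≤ u := by
        by_contra hua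
        push_neg at hua
        have : phiD u ≤ 2 * u := phiD_le hu0 (by linarith)
        have : phiD u ≤ n / (4 * L ^ 2) := by
          calc phiD u ≤ 2 * u := this
            _ ≤ 2 * a := by linarith
            _ ≤ n / (4 * L ^ 2) := by
                calc 2 * a ≤ 2 * (n / (4 * L ^ 2) / 2) := by
                      apply mul_le_mul_of_nonneg_left (min_le_left _ _) (by norm_num)
                  _ = n / (4 * L ^ 2) := by ring
        linarith
      have hivt := intermediate_value_Icc hau (phiD_contOn ha0 hu1)
      have hmem : (n / (4 * L ^ 2) : ℝ) ∈ Set.Icc (phiD a) (phiD u) :=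
        ⟨haval, hprev.le⟩
      obtain ⟨t, ht, hpt⟩ := hivt hmem
      have ht0 : 0 < t := lt_of_lt_of_le ha0 ht.1
      have htu : t ≤ u := ht.2
      have ht1 : t < 1 := lt_of_le_of_lt htu hu1
      set c := Real.sqrt (t / u) with hcdef
      have hc0 : 0 < c := Real.sqrt_pos.mpr (by positivity)
      have hc1 : c ≤ 1 := by
        rw [hcdef]
        rw [show (1:ℝ) = Real.sqrt 1 by rw [Real.sqrt_one]]
        exact Real.sqrt_le_sqrt (by rw [div_le_one hu0]; exact htu)
      have hc2u : c ^ 2 * u = t := by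
        rw [hcdef, Real.sq_sqrt (by positivity : (0:ℝ) ≤ t / u)]
        field_simp
      set w := (c : ℂ) * z with hwdef
      have habsw : ‖w‖ = c * R := by
        rw [hwdef, norm_mul, Complex.norm_real, Real.norm_eq_abs, _root_.abs_of_nonneg hc0.le]
      have hw1 : ‖w‖ < 1 := by
        rw [habsw]
        calc c * R ≤ 1 * R := mul_le_mul_of_nonneg_right hc1 hR0.le
          _ = R := one_mul R
          _ < 1 := hR1
      have hwball : w ∈ ball (0 : ℂ) 1 := by
        rw [mem_ball_zero_iff]
        exact hw1
      have hwu : ‖w‖ ^ 2 = t := by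
        rw [habsw]; rw [mul_pow]; rw [← hudef]; exact hc2u
      have ihw : (3/16 : ℝ) ^ n ≤ 1 - ‖f w‖ := by
        apply ih w hwball
        rw [hwu, hpt]
      -- estimate dirDelta z w
      have hcu0 : 0 < c * u := by positivity
      have hcu1 : c * u < 1 := by nlinarith
      have hKt : 0 < KK t := KK_pos ht0 ht1
      have hKu : 0 < KK u := KK_pos hu0 hu1
      have hcsq : c ^ 2 * u ≤ c * u := by
        apply mul_le_mul_of_nonneg_right _ hu0.le
        calc c ^ 2 = c * c := sq c
          _ ≤ 1 * c := mul_le_mul_of_nonneg_right hc1 hc0.le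
          _ = c := one_mul c
      have hKcu : KK t ≤ KK (c * u) := by
        rw [← hc2u]
        exact KK_mono (by positivity) hcsq hcu1
      have hdd : dirDelta z w ≤ 1 / (2 * L) := by
        rw [hwdef, dirDelta_eq z c hz0 hR1 hc0 hc1, ← hudef, hc2u]
        have hratio : KK t / KK u ≤ KK (c * u) ^ 2 / (KK u * KK t) := by
          rw [div_le_div_iff₀ hKu (by positivity)]
          calc KK t * (KK u * KK t) = (KK t * KK t) * KK u := by ring
            _ ≤ (KK (c * u) * KK (c * u)) * KK u := by
                apply mul_le_mul_of_nonneg_right _ hKu.le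
                exact mul_le_mul hKcu hKcu hKt.le (le_trans hKt.le hKcu)
            _ = KK (c * u) ^ 2 * KK u := by ring
        have hlog : 1 - KK t / KK u ≤ phiD u - phiD t := by
          have := one_sub_le_neg_log (x := KK t / KK u) (by positivity)
          rw [Real.log_div hKt.ne' hKu.ne'] at this
          rw [phiD, phiD]
          linarith
        have harg : 1 - KK (c * u) ^ 2 / (KK u * KK t) ≤ 1 / (4 * L ^ 2) := by
          have h1 : phiD u - phiD t ≤ 1 / (4 * L ^ 2) := by
            rw [hpt]
            have : phiD u ≤ (n + 1) / (4 * L ^ 2) := by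
              have := hphi
              push_cast at this ⊢
              linarith
            have hsplit : ((n:ℝ) + 1) / (4 * L ^ 2) = n / (4 * L ^ 2) + 1 / (4 * L ^ 2) := by
              ring
            linarith [this, hsplit ▸ this]
          linarith [hratio, hlog]
        calc Real.sqrt (1 - KK (c * u) ^ 2 / (KK u * KK t)) ≤
              Real.sqrt (1 / (4 * L ^ 2)) := Real.sqrt_le_sqrt harg
          _ = 1 / (2 * L) := by
              rw [show (1:ℝ) / (4 * L ^ 2) = (1 / (2 * L)) ^ 2 by field_simp; ring,
                Real.sqrt_sq (by positivity)]
      have hrho : pseudoHyp (f z) (f w) ≤ 1 / 2 := by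
        calc pseudoHyp (f z) (f w) ≤ L * dirDelta z w := hLip z hz w hwball
          _ ≤ L * (1 / (2 * L)) := mul_le_mul_of_nonneg_left hdd hL0.le
          _ = 1 / 2 := by field_simp; try ring
      have hstep := pseudo_step (hmap z hz) (hmap w hwball) hrho
      calc (3/16 : ℝ) ^ (n+1) = (3/16) * (3/16 : ℝ) ^ n := by ring
        _ ≤ (3/16) * (1 - ‖f w‖) := by
            apply mul_le_mul_of_nonneg_left ihw (by norm_num)
        _ ≤ 1 - ‖f z‖ := hstep

set_option maxHeartbeats 2000000 in
/-- If `f : 𝔻 → 𝔹_d` is Lipschitz from the Dirichlet metric to the pseudohyperbolic metric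
with `f(0) = 0`, then there is `C ∈ (0,∞)` with
`‖f(z)‖ ≤ 1 − exp(−C·(log(1/(1−|z|)))^{1/2})` for all `z ∈ 𝔻`. -/
theorem lipschitz_slow_growth (d : ℕ) (f : ℂ → EuclideanSpace ℂ (Fin d)) (L : ℝ)
    (hmap : ∀ z ∈ ball (0 : ℂ) 1, ‖f z‖ < 1) (h0 : f 0 = 0)
    (hLip : ∀ z ∈ ball (0 : ℂ) 1, ∀ w ∈ ball (0 : ℂ) 1,
      pseudoHyp (f z) (f w) ≤ L * dirDelta z w) :
    ∃ C : ℝ, 0 < C ∧ ∀ z ∈ ball (0 : ℂ) 1,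
      ‖f z‖ ≤ 1 - Real.exp (-C * Real.sqrt (Real.log (1 / (1 - ‖z‖)))) := by
  set L' := max L 1 with hL'def
  have hL1 : 1 ≤ L' := le_max_right _ _
  have hL0 : (0:ℝ) < L' := lt_of_lt_of_le one_pos hL1
  have hLip' : ∀ z ∈ ball (0:ℂ) 1, ∀ w ∈ ball (0:ℂ) 1,
      pseudoHyp (f z) (f w) ≤ L' * dirDelta z w := fun z hz w hw =>
    le_trans (hLip z hz w hw)
      (mul_le_mul_of_nonneg_right (le_max_left _ _) (dirDelta_nonneg z w))
  refine ⟨60 * L' ^ 3, by positivity, ?_⟩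
  intro z hz
  have hR1 : ‖z‖ < 1 := abs_lt_one_of_mem hz
  have hR0 : (0:ℝ) ≤ ‖z‖ := norm_nonneg z
  set R := ‖z‖ with hRdef
  set s := Real.sqrt (Real.log (1 / (1 - R))) with hsdef
  have h1R : (0:ℝ) < 1 - R := by linarith
  have hlog0 : 0 ≤ Real.log (1 / (1 - R)) := by
    apply Real.log_nonneg
    rw [le_one_div one_pos h1R]
    simp; linarith
  have hs0 : 0 ≤ s := Real.sqrt_nonneg _
  have hs2 : s ^ 2 = Real.log (1 - R)⁻¹ := by
    rw [hsdef, Real.sq_sqrt hlog0, one_div]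
  have hexp_le_one : Real.exp (-(60 * L' ^ 3) * s) ≤ 1 := by
    rw [← Real.exp_zero]
    apply Real.exp_le_exp.mpr
    have h := mul_nonneg (by positivity : (0:ℝ) ≤ 60 * L' ^ 3) hs0
    linarith
  rcases eq_or_ne z 0 with rfl | hz0
  · rw [h0, norm_zero]; linarith
  have hRpos : 0 < R := norm_pos_iff.mpr hz0
  set u := R ^ 2 with hudef
  have hu0 : 0 < u := by positivity
  have hu1 : u < 1 := by nlinarith
  have huR : u ≤ R := by nlinarith
  have hRles : R ≤ s ^ 2 := by rw [hs2]; exact le_log_inv hR0 hR1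
  by_cases hcase : s ≤ 1 / (4 * L')
  · -- small s : single application of Lipschitz bound at 0
    have hsquarter : s ≤ 1/4 := by
      calc s ≤ 1 / (4 * L') := hcase
        _ ≤ 1/4 := by
            rw [div_le_div_iff₀ (by positivity) (by norm_num)]
            nlinarith
    have hu_half : u ≤ 1/2 := by nlinarith
    have hstep := hLip' z hz 0 (mem_ball_self one_pos)
    rw [h0, pseudoHyp_zero, dirDelta_zero z hz0 hR1] at hstep
    have hKpos : 0 < KK u := KK_pos hu0 hu1
    have h1 : (1:ℝ) - 1 / KK u ≤ phiD u := by
      have := one_sub_le_neg_log (x := (KK u)⁻¹) (by positivity)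
      rw [Real.log_inv] at this
      rw [phiD, one_div]
      linarith
    have h2 : phiD u ≤ 2 * u := phiD_le hu0 hu_half
    have h3 : (1:ℝ) - 1 / KK u ≤ 2 * s ^ 2 := by nlinarith
    have h4 : Real.sqrt (1 - 1 / KK u) ≤ Real.sqrt 2 * s := by
      calc Real.sqrt (1 - 1 / KK u) ≤ Real.sqrt (2 * s ^ 2) := Real.sqrt_le_sqrt h3
        _ = Real.sqrt 2 * s := by
            rw [Real.sqrt_mul (by norm_num) (s ^ 2), Real.sqrt_sq hs0]
    have hfz : ‖f z‖ ≤ L' * (Real.sqrt 2 * s) := by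
      calc ‖f z‖ ≤ L' * Real.sqrt (1 - 1 / KK u) := hstep
        _ ≤ L' * (Real.sqrt 2 * s) := mul_le_mul_of_nonneg_left h4 hL0.le
    have hsqrt2 : Real.sqrt 2 ≤ 3/2 := sqrt_two_le
    have hden : (0:ℝ) < 1 + 60 * L' ^ 3 * s := by positivity
    have hexp : Real.exp (-(60 * L' ^ 3) * s) ≤ 1 / (1 + 60 * L' ^ 3 * s) := by
      rw [show -(60 * L' ^ 3) * s = -(60 * L' ^ 3 * s) by ring, Real.exp_neg, one_div]
      apply inv_anti₀ hden
      linarith [Real.add_one_le_exp (60 * L' ^ 3 * s)]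
    have hss : 4 * L' * (s * s) ≤ s := by
      have h5 : 4 * L' * s ≤ 1 := by
        rw [le_div_iff₀ (by positivity : (0:ℝ) < 4 * L')] at hcase
        linarith
      calc 4 * L' * (s * s) = (4 * L' * s) * s := by ring
        _ ≤ 1 * s := mul_le_mul_of_nonneg_right h5 hs0
        _ = s := one_mul s
    have hkey : L' * (Real.sqrt 2 * s) * (1 + 60 * L' ^ 3 * s) ≤ 60 * L' ^ 3 * s :=
      caseA_key hL1 hs0 (Real.sqrt_nonneg 2) hsqrt2 hss
    have h5 : L' * (Real.sqrt 2 * s) ≤ 1 - 1 / (1 + 60 * L' ^ 3 * s) := by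
      have h6 : L' * (Real.sqrt 2 * s) ≤ (60 * L' ^ 3 * s) / (1 + 60 * L' ^ 3 * s) :=
        (le_div_iff₀ hden).mpr hkey
      have heq : (60 * L' ^ 3 * s) / (1 + 60 * L' ^ 3 * s)
          = 1 - 1 / (1 + 60 * L' ^ 3 * s) := by
        rw [eq_sub_iff_add_eq, ← add_div, div_eq_one_iff_eq hden.ne']
        ring
      linarith
    linarith [hexp, hfz, h5]
  · -- large s : chain bound
    push_neg at hcase
    set n := ⌈phiD u * (4 * L' ^ 2)⌉₊ with hndef
    have hphiu0 : 0 ≤ phiD u := (phiD_pos hu0 hu1).le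
    have hphin : phiD u ≤ n / (4 * L' ^ 2) := by
      rw [le_div_iff₀ (by positivity : (0:ℝ) < 4 * L' ^ 2)]
      exact Nat.le_ceil _
    have hchain := chain_bound f L' hL1 hmap h0 hLip' n z hz hphin
    have hnle : (n : ℝ) < phiD u * (4 * L' ^ 2) + 1 :=
      Nat.ceil_lt_add_one (by positivity)
    have h4Ls : 1 ≤ 4 * L' * s := by
      rw [div_lt_iff₀ (by positivity : (0:ℝ) < 4 * L')] at hcase
      nlinarith
    have hphibound : phiD u ≤ 2 * s + 1 := by
      by_cases huh : u ≤ 1/2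
      · have := phiD_le hu0 huh
        nlinarith
      · push_neg at huh
        have hlogu_pos : 0 < Real.log (1 - u)⁻¹ :=
          lt_of_lt_of_le hu0 (le_log_inv hu0.le hu1)
        have hloglog : Real.log (1 - u)⁻¹ ≤ s ^ 2 := by
          rw [hs2]
          have hupos : (0:ℝ) < 1 - u := by linarith
          apply Real.log_le_log (by positivity)
          apply inv_anti₀ h1R
          linarith
        have hKK2 : KK u ≤ 2 * Real.log (1 - u)⁻¹ := by
          rw [KK, div_le_iff₀ hu0]
          nlinarith [hlogu_pos]
        have hs2pos : (0:ℝ) < s ^ 2 := lt_of_lt_of_le hlogu_pos hloglog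
        have hspos : 0 < s := by nlinarith [hs0, hs2pos]
        have h7 : phiD u ≤ Real.log (2 * s ^ 2) := by
          rw [phiD]
          apply Real.log_le_log (KK_pos hu0 hu1)
          linarith
        have h8 : Real.log (2 * s ^ 2) = Real.log 2 + 2 * Real.log s := by
          rw [Real.log_mul (by norm_num) (by positivity), Real.log_pow]
          push_cast; ring
        have h9 : Real.log s ≤ s - 1 := by
          have := Real.log_le_sub_one_of_pos hspos
          linarith
        have h10 : Real.log 2 ≤ 1 := by
          have := Real.log_le_sub_one_of_pos (by norm_num : (0:ℝ) < 2)
          linarith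
        nlinarith [h7, h8, h9, h10]
    have hns : 2 * (n : ℝ) ≤ 60 * L' ^ 3 * s :=
      caseB_key hL1 hs0 h4Ls hphiu0 hphibound hnle
    have hexp2 : Real.exp (-(60 * L' ^ 3) * s) ≤ (3/16 : ℝ) ^ n := by
      have he1 : Real.exp (-(60 * L' ^ 3) * s) ≤ Real.exp (-(2 * (n:ℝ))) := by
        apply Real.exp_le_exp.mpr
        nlinarith [hns]
      have he2 : Real.exp (-(2 * (n:ℝ))) = (Real.exp (-2)) ^ n := by
        rw [show -(2 * (n:ℝ)) = (n:ℝ) * (-2) by ring, ← Real.exp_nat_mul]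
      have he3 : Real.exp (-2 : ℝ) ≤ 3/16 := exp_neg_two_le
      calc Real.exp (-(60 * L' ^ 3) * s) ≤ Real.exp (-(2 * (n:ℝ))) := he1
        _ = (Real.exp (-2)) ^ n := he2
        _ ≤ (3/16 : ℝ) ^ n := pow_le_pow_left₀ (Real.exp_nonneg _) he3 n
    linarith [hchain, hexp2]
end

section
/- There exists a constant M ∈ (0,∞) such that for every r ∈ [0,1), the curve γ_r : [0,r] → 𝔻, t ↦ t, satisfies ℓ_δ(γ_r) ≤ M·(log(1/(1−r)))^{1/2}, where ℓ_δ denotes length with respect to the Dirichlet metric δ. -/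
open Complex Metric

/-- The length of a curve `γ : [a,b] → X` with respect to a pseudometric `d`:
the supremum over all partitions `a = t₀ < t₁ < … < tₙ = b` of
`Σ_{i=0}^{n−1} d(γ(tᵢ), γ(tᵢ₊₁))`. -/
noncomputable def curveLen {X : Type*} (d : X → X → ℝ) (a b : ℝ) (γ : ℝ → X) : ENNReal :=
  sSup {L : ENNReal | ∃ (n : ℕ) (t : ℕ → ℝ), t 0 = a ∧ t n = b ∧
    (∀ i, i < n → t i < t (i + 1)) ∧
    L = ∑ i ∈ Finset.range n, ENNReal.ofReal (d (γ (t i)) (γ (t (i + 1))))}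

namespace DirichletProof

noncomputable def kkR (s t : ℝ) : ℝ :=
  if s * t = 0 then 1 else (1 / (s * t)) * Real.log (1 / (1 - s * t))

lemma dirK_ofReal (s t : ℝ) (h1 : s * t < 1) :
    dirK (s : ℂ) (t : ℂ) = ((kkR s t : ℝ) : ℂ) := by
  unfold dirK kkR
  rw [Complex.conj_ofReal, ← Complex.ofReal_mul]
  by_cases hc : s * t = 0
  · simp [hc]
  · rw [if_neg (by simpa using hc), if_neg hc]
    have h2 : (0:ℝ) < 1 - s * t := by linarith
    have hlog : Complex.log ((1:ℂ) / (1 - ((s*t : ℝ) : ℂ))) = ((Real.log (1/(1-s*t)) : ℝ) : ℂ) := by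
      rw [show ((1:ℂ) / (1 - ((s*t:ℝ) : ℂ))) = ((1/(1-s*t) : ℝ) : ℂ) by push_cast; ring]
      exact (Complex.ofReal_log (by positivity : (0:ℝ) ≤ 1/(1-s*t))).symm
    rw [hlog]
    push_cast
    ring

lemma dirDelta_ofReal (s t : ℝ) (h1 : s * t < 1) (h2 : s * s < 1) (h3 : t * t < 1) :
    dirDelta (s : ℂ) (t : ℂ) =
      Real.sqrt (1 - (kkR s t) ^ 2 / (kkR s s * kkR t t)) := by
  unfold dirDelta
  rw [dirK_ofReal s t h1, dirK_ofReal s s h2, dirK_ofReal t t h3]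
  simp [Complex.norm_real, sq_abs]

lemma le_negLog {v : ℝ} (h0 : 0 ≤ v) (h1 : v < 1) : v ≤ -Real.log (1 - v) := by
  have h := Real.log_le_sub_one_of_pos (show (0:ℝ) < 1 - v by linarith)
  linarith

lemma negLog_mul_le {v : ℝ} (h1 : v < 1) : (-Real.log (1 - v)) * (1 - v) ≤ v := by
  have h2 : (0:ℝ) < 1 - v := by linarith
  have h := Real.log_le_sub_one_of_pos (show (0:ℝ) < (1-v)⁻¹ by positivity)
  rw [Real.log_inv] at h
  have h3 : (-Real.log (1-v)) * (1-v) ≤ ((1-v)⁻¹ - 1) * (1-v) :=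
    mul_le_mul_of_nonneg_right h h2.le
  have h4 : ((1-v)⁻¹ - 1) * (1-v) = v := by field_simp; ring
  linarith

lemma negLog_mono {v w : ℝ} (hvw : v ≤ w) (hw : w < 1) :
    -Real.log (1 - v) ≤ -Real.log (1 - w) := by
  have := Real.log_le_log (show (0:ℝ) < 1 - w by linarith) (show 1 - w ≤ 1 - v by linarith)
  linarith

lemma negLog_pos {v : ℝ} (h0 : 0 < v) (h1 : v < 1) : 0 < -Real.log (1 - v) := by
  have := Real.log_neg (show (0:ℝ) < 1 - v by linarith) (by linarith)
  linarith



lemma sq_gap (A B : ℝ) (hA : 0 ≤ A) (h : 2*A^2 ≤ B^2) : 2*B^2 ≤ 25*(B-A)^2 := by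
  nlinarith [sq_nonneg (33*B - 50*A), sq_nonneg A]

lemma mul_one_sub_le {x y : ℝ} (hx : 0 ≤ x) (hxy : x ≤ y) (hy : y ≤ 1) :
    x*(1-y) ≤ y := by nlinarith

lemma one_sub_le_sq (y : ℝ) (hy : 0 ≤ y) : 1 - y ≤ (1-y/4)^2 := by nlinarith

lemma far_key (A B : ℝ) (hA : 0 < A) (hAB : A ≤ B) (hd : 1/4 ≤ B^2 - A^2) :
    B^2 - A^2 ≤ (B-A)^2*(1+25*(A*B)) := by
  have hd0 : (0:ℝ) ≤ B^2 - A^2 := by linarith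
  have hABn : 0 ≤ A*B := mul_nonneg hA.le (le_trans hA.le hAB)
  have h2 : (B+A)^2 ≤ (B^2-A^2)*(1+25*(A*B)) := by
    nlinarith [mul_le_mul_of_nonneg_right hd hABn, hA.le, hAB]
  have h3 : (B^2-A^2)*(B+A)^2 ≤ ((B-A)^2*(1+25*(A*B)))*(B+A)^2 := by
    nlinarith [mul_le_mul_of_nonneg_left h2 hd0]
  exact le_of_mul_le_mul_right h3 (pow_pos (by linarith : (0:ℝ) < B+A) 2)

lemma sliver_num (A B : ℝ) (hA : 0 < A) (hAB : A ≤ B) (hd : B^2 - A^2 < 1/4)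
    (ha8 : B^2 ≤ 8*A^2) : 1 + B^2 ≤ (1-(B^2-A^2))*(1+25*(A*B)) := by
  have hB3A : B ≤ 3*A := by nlinarith
  have hABb : B^2 ≤ 3*(A*B) := by nlinarith
  have hABn : 0 ≤ A*B := mul_nonneg hA.le (le_trans hA.le hAB)
  nlinarith [mul_le_mul_of_nonneg_right hd.le hABn, hABb, ha8]

lemma finish_key (A B u : ℝ) (hABu : u ≤ A*B) (hABn : 0 ≤ A*B)
    (hE : A^2 + B^2 - 2*u ≤ (B-A)^2*(1+25*(A*B))) :
    A^2*B^2 - u^2 ≤ 25*(B-A)^2*(A^2*B^2) := by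
  nlinarith [mul_le_mul_of_nonneg_left hE hABn, sq_nonneg (A*B - u)]

lemma sum_sq (A B s t Q : ℝ) (hA : 0 ≤ A) (hB : 0 ≤ B) (hs : 0 ≤ s) (ht : 0 ≤ t)
    (hQ : 0 ≤ Q) (h1 : A ≤ s*Q) (h2 : B ≤ t*Q) : (B+A)^2 ≤ (s+t)^2*Q^2 := by
  have h3 : B + A ≤ (s+t)*Q := by nlinarith
  have h4 := mul_self_le_mul_self (add_nonneg hB hA) h3
  nlinarith [h4]

set_option maxHeartbeats 1000000 in
lemma core (s t : ℝ) (hs : 0 < s) (hst : s ≤ t) (ht1 : t < 1) :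
    1 - (-Real.log (1 - s*t))^2 / ((-Real.log (1 - s*s)) * (-Real.log (1 - t*t)))
      ≤ 25 * (Real.sqrt (-Real.log (1 - t*t)) - Real.sqrt (-Real.log (1 - s*s)))^2 := by
  have ht : 0 < t := lt_of_lt_of_le hs hst
  have hs1 : s < 1 := lt_of_le_of_lt hst ht1
  set x := s*s with hxd
  set y := t*t with hyd
  have hx0 : 0 < x := mul_pos hs hs
  have hy0 : 0 < y := mul_pos ht ht
  have hy1 : y < 1 := by nlinarith
  have hx1 : x < 1 := by nlinarith
  have hxley : x ≤ y := by nlinarith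
  have hxst : x ≤ s*t := by nlinarith
  have hsty : s*t ≤ y := by nlinarith
  have hst1 : s*t < 1 := by nlinarith
  have hst0 : 0 < s*t := mul_pos hs ht
  set a := -Real.log (1-x) with had
  set b := -Real.log (1-y) with hbd
  set u := -Real.log (1-s*t) with hud
  have ha0 : 0 < a := negLog_pos hx0 hx1
  have hax : x ≤ a := le_negLog hx0.le hx1
  have hby : y ≤ b := le_negLog hy0.le hy1
  have hust : s*t ≤ u := le_negLog hst0.le hst1
  have hau : a ≤ u := negLog_mono hxst hst1
  have hub : u ≤ b := negLog_mono hsty hy1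
  have hab : a ≤ b := le_trans hau hub
  have hb0 : 0 < b := lt_of_lt_of_le ha0 hab
  have hu0 : 0 < u := lt_of_lt_of_le ha0 hau
  have haX : a * (1-x) ≤ x := negLog_mul_le hx1
  have hbY : b * (1-y) ≤ y := negLog_mul_le hy1
  have hab0 : 0 < a*b := mul_pos ha0 hb0
  set A := Real.sqrt a with hAd
  set B := Real.sqrt b with hBd
  have hA2 : A^2 = a := Real.sq_sqrt ha0.le
  have hB2 : B^2 = b := Real.sq_sqrt hb0.le
  have hA0 : 0 < A := Real.sqrt_pos.mpr ha0
  have hB0 : 0 < B := Real.sqrt_pos.mpr hb0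
  have hAB : A ≤ B := Real.sqrt_le_sqrt hab
  have h1x : (0:ℝ) < 1 - x := by linarith
  have h1y : (0:ℝ) < 1 - y := by linarith
  have hBA0 : 0 ≤ B - A := by linarith
  clear_value x y a b u A B
  rcases le_or_gt s (t/2) with hhalf | hhalf
  · -- Case: s ≤ t/2, so a ≤ b/2 and everything is crude
    have hxy4 : x ≤ y/4 := by
      have h1 := mul_self_le_mul_self hs.le hhalf
      rw [← hxd] at h1
      have h2 : (t/2)*(t/2) = y/4 := by rw [hyd]; ring
      linarith only [h1, h2]
    have hyy : -Real.log (1 - y/4) ≤ b/2 := by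
      have hsq : 1 - y ≤ (1 - y/4)^2 := one_sub_le_sq y hy0.le
      have hll := Real.log_le_log h1y hsq
      rw [Real.log_pow] at hll
      push_cast at hll
      rw [hbd]
      linarith
    have h2a : 2*a ≤ b := by
      have := negLog_mono hxy4 (by linarith : y/4 < 1)
      rw [← had] at this
      linarith
    have hstxy : (s*t)*(s*t) = x*y := by rw [hxd, hyd]; ring
    have hu2 : x*y ≤ u^2 := by
      calc x*y = (s*t)*(s*t) := hstxy.symm
        _ ≤ u*u := mul_self_le_mul_self hst0.le hust
        _ = u^2 := (pow_two u).symm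
    have habxy : (a*(1-x))*(b*(1-y)) ≤ x*y :=
      mul_le_mul haX hbY (mul_nonneg hb0.le h1y.le) hx0.le
    have hdiv : (1-x)*(1-y) ≤ u^2/(a*b) := by
      rw [le_div_iff₀ hab0]
      linarith only [habxy, hu2]
    have h2B : 2*b ≤ 25*(B-A)^2 := by
      have := sq_gap A B hA0.le (by rw [hA2, hB2]; exact h2a)
      rw [hB2] at this
      linarith only [this]
    have hx1y : x*(1-y) ≤ y := mul_one_sub_le hx0.le hxley hy1.le
    have e : 1 - (1-x)*(1-y) = x*(1-y) + y := by ring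
    linarith only [hdiv, h2B, hby, hx1y, e]
  · -- Case: s > t/2
    rcases le_or_gt u (A*B) with hc | hc
    swap
    · -- trivial: u ≥ √(ab), LHS ≤ 0
      have hup : a*b ≤ u^2 := by
        calc a*b = (A*B)*(A*B) := by rw [← hA2, ← hB2]; ring
          _ ≤ u*u := mul_self_le_mul_self (mul_nonneg hA0.le hB0.le) hc.le
          _ = u^2 := (pow_two u).symm
      have hge : 1 ≤ u^2/(a*b) := by rw [le_div_iff₀ hab0]; linarith only [hup]
      have hrhs : (0:ℝ) ≤ 25*(B-A)^2 := by positivity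
      linarith only [hge, hrhs]
    · have hABpos : 0 < A*B := mul_pos hA0 hB0
      have hE : a + b - 2*u ≤ (B-A)^2 * (1 + 25*(A*B)) := by
        rcases le_or_gt (1/4 : ℝ) (b - a) with hd | hd
        · -- far apart in log scale
          have hfar := far_key A B hA0 hAB (by rw [hA2, hB2]; exact hd)
          rw [hA2, hB2] at hfar
          linarith only [hfar, hau]
        · -- the near-diagonal sliver
          have hd0 : (0:ℝ) ≤ b - a := by linarith
          have ha8 : b ≤ 8*a := by
            rcases le_or_gt b 1 with hb1 | hb1
            · have htt4 : (t/2)*(t/2) < x := by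
                have := mul_self_lt_mul_self (by linarith : (0:ℝ) ≤ t/2) hhalf
                rw [← hxd] at this
                exact this
              have hyx4 : y/4 < x := by
                have he : y/4 = (t/2)*(t/2) := by rw [hyd]; ring
                linarith only [htt4, he.ge, he.le]
              have hyb2 : y*b ≤ y*1 := mul_le_mul_of_nonneg_left hb1 hy0.le
              linarith only [hbY, hyb2, hyx4, hax]
            · linarith only [hd, hb1]
          have hnum : 1 + b ≤ (1-(b-a))*(1+25*(A*B)) := by
            have h := sliver_num A B hA0 hAB (by rw [hA2, hB2]; exact hd)
              (by rw [hA2, hB2]; exact ha8)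
            rw [hA2, hB2] at h
            exact h
          have hσ : (0:ℝ) < s + t := by linarith
          have hW : (0:ℝ) < (1-s*t)^2/((1-x)*(1-y)) :=
            div_pos (pow_pos (by linarith : (0:ℝ) < 1 - s*t) 2) (mul_pos h1x h1y)
          have hlogW : Real.log ((1-s*t)^2/((1-x)*(1-y))) = a + b - 2*u := by
            rw [Real.log_div (pow_ne_zero 2 (ne_of_gt (by linarith : (0:ℝ) < 1 - s*t)))
                  (ne_of_gt (mul_pos h1x h1y)),
                Real.log_mul (ne_of_gt h1x) (ne_of_gt h1y), Real.log_pow]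
            push_cast
            rw [had, hbd, hud]
            ring
          have h2E : a + b - 2*u ≤ (1-s*t)^2/((1-x)*(1-y)) - 1 := by
            have h := Real.log_le_sub_one_of_pos hW
            rw [hlogW] at h
            exact h
          have hWm1 : (1-s*t)^2/((1-x)*(1-y)) - 1
              = (y-x)^2/((s+t)^2*((1-x)*(1-y))) := by
            rw [hxd, hyd]
            have n1 : (1:ℝ) - s*s ≠ 0 := by rw [← hxd]; exact ne_of_gt h1x
            have n2 : (1:ℝ) - t*t ≠ 0 := by rw [← hyd]; exact ne_of_gt h1y
            have n3 : s + t ≠ 0 := ne_of_gt hσ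
            rw [div_sub_one (mul_ne_zero n1 n2), div_eq_div_iff (mul_ne_zero n1 n2)
              (mul_ne_zero (pow_ne_zero 2 n3) (mul_ne_zero n1 n2))]
            ring
          have hyx : y - x ≤ (b-a)*(1-x) := by
            have h := Real.log_le_sub_one_of_pos
              (show (0:ℝ) < (1-y)/(1-x) from div_pos h1y h1x)
            rw [Real.log_div (ne_of_gt h1y) (ne_of_gt h1x)] at h
            have h' : a - b ≤ (1-y)/(1-x) - 1 := by
              rw [had, hbd]; linarith only [h]
            have h'' : (a - b + 1) * (1-x) ≤ 1 - y := by
              have := (le_div_iff₀ h1x).mp (by linarith only [h'] :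
                a - b + 1 ≤ (1-y)/(1-x))
              linarith only [this]
            linarith only [h'']
          have hyx0 : (0:ℝ) ≤ y - x := by linarith
          have hsq : (y-x)*(y-x) ≤ ((b-a)*(1-x))*((b-a)*(1-x)) :=
            mul_self_le_mul_self hyx0 hyx
          have hrho : (y-x)^2/((s+t)^2*((1-x)*(1-y)))
              ≤ (b-a)^2*(1-x)/((s+t)^2*(1-y)) := by
            rw [div_le_div_iff₀
              (mul_pos (pow_pos hσ 2) (mul_pos h1x h1y))
              (mul_pos (pow_pos hσ 2) h1y)]
            have hmul := mul_le_mul_of_nonneg_right hsq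
              (le_of_lt (mul_pos (pow_pos hσ 2) h1y))
            linarith only [hmul]
          have hfinal : (b-a)^2*(1-x)/((s+t)^2*(1-y)) ≤ (B-A)^2 * (1 + 25*(A*B)) := by
            rw [div_le_iff₀ (mul_pos (pow_pos hσ 2) h1y)]
            set Q := Real.sqrt (1+b) with hQd
            have hQ2 : Q^2 = 1 + b := Real.sq_sqrt (by linarith)
            have hQ0 : 0 < Q := Real.sqrt_pos.mpr (by linarith)
            clear_value Q
            have hax2 : a*x ≤ b*x := mul_le_mul_of_nonneg_right hab hx0.le
            have haxb : a ≤ x*(1+b) := by linarith only [haX, hax2]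
            have hbyb : b ≤ y*(1+b) := by linarith only [hbY]
            have hA_le : A ≤ s*Q := by
              have h5 : x*(1+b) = (s*Q)^2 := by
                rw [mul_pow, hQ2, hxd]; ring
              have h6 := Real.sqrt_le_sqrt haxb
              rw [h5, Real.sqrt_sq (mul_nonneg hs.le hQ0.le)] at h6
              rw [hAd]; exact h6
            have hB_le : B ≤ t*Q := by
              have h5 : y*(1+b) = (t*Q)^2 := by
                rw [mul_pow, hQ2, hyd]; ring
              have h6 := Real.sqrt_le_sqrt hbyb
              rw [h5, Real.sqrt_sq (mul_nonneg ht.le hQ0.le)] at h6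
              rw [hBd]; exact h6
            have hBA2 : (B+A)^2 ≤ (s+t)^2*Q^2 :=
              sum_sq A B s t Q hA0.le hB0.le hs.le ht.le hQ0.le hA_le hB_le
            rw [hQ2] at hBA2
            have h1xd : (1-x)*(1-(b-a)) ≤ 1-y := by linarith only [hyx]
            have t1 : (B+A)^2*(1-x) ≤ ((s+t)^2*(1+b))*(1-x) :=
              mul_le_mul_of_nonneg_right hBA2 h1x.le
            have t2a : (1+b)*(1-x) ≤ ((1-(b-a))*(1+25*(A*B)))*(1-x) :=
              mul_le_mul_of_nonneg_right hnum h1x.le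
            have t2b : (1+25*(A*B))*((1-x)*(1-(b-a))) ≤ (1+25*(A*B))*(1-y) :=
              mul_le_mul_of_nonneg_left h1xd (by positivity)
            have step2 : (1+b)*(1-x) ≤ (1+25*(A*B))*(1-y) := by
              linarith only [t2a, t2b]
            have t3 : (s+t)^2*((1+b)*(1-x)) ≤ (s+t)^2*((1+25*(A*B))*(1-y)) :=
              mul_le_mul_of_nonneg_left step2 (sq_nonneg (s+t))
            have inner : (B+A)^2*(1-x) ≤ (1+25*(A*B))*((s+t)^2*(1-y)) := by
              linarith only [t1, t3]
            have e1 : (b-a)^2 = (B-A)^2*(B+A)^2 := by rw [← hA2, ← hB2]; ring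
            calc (b-a)^2*(1-x) = (B-A)^2*((B+A)^2*(1-x)) := by rw [e1]; ring
              _ ≤ (B-A)^2*((1+25*(A*B))*((s+t)^2*(1-y))) :=
                  mul_le_mul_of_nonneg_left inner (sq_nonneg _)
              _ = (B-A)^2 * (1 + 25*(A*B)) * ((s+t)^2*(1-y)) := by ring
          calc a + b - 2*u ≤ (1-s*t)^2/((1-x)*(1-y)) - 1 := h2E
            _ = (y-x)^2/((s+t)^2*((1-x)*(1-y))) := hWm1
            _ ≤ (b-a)^2*(1-x)/((s+t)^2*(1-y)) := hrho
            _ ≤ (B-A)^2 * (1 + 25*(A*B)) := hfinal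
      -- finish from hE and u ≤ A*B
      rw [← hA2, ← hB2] at hE
      have h := finish_key A B u hc hABpos.le hE
      rw [hA2, hB2] at h
      have h2 : 1 - u^2/(a*b) = (a*b - u^2)/(a*b) := by field_simp
      rw [h2, div_le_iff₀ hab0]
      linarith only [h]


lemma kkR_pos_eq (s t : ℝ) (hs : 0 < s) (ht : 0 < t) :
    kkR s t = (-Real.log (1 - s*t)) / (s*t) := by
  unfold kkR
  rw [if_neg (by positivity : s*t ≠ 0), one_div ((1:ℝ) - s*t), Real.log_inv]
  ring

lemma key (s t : ℝ) (hs : 0 ≤ s) (hst : s ≤ t) (ht1 : t < 1) :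
    dirDelta (s:ℂ) (t:ℂ)
      ≤ 5 * (Real.sqrt (-Real.log (1 - t*t)) - Real.sqrt (-Real.log (1 - s*s))) := by
  have ht0 : 0 ≤ t := le_trans hs hst
  have hs1 : s < 1 := lt_of_le_of_lt hst ht1
  have hst1 : s*t < 1 := by nlinarith
  have hss1 : s*s < 1 := by nlinarith
  have htt1 : t*t < 1 := by nlinarith
  rw [dirDelta_ofReal s t hst1 hss1 htt1]
  rcases eq_or_lt_of_le hs with hs0 | hs0
  · -- s = 0
    rw [← hs0]
    rcases eq_or_lt_of_le ht0 with ht00 | htpos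
    · -- t = 0
      rw [← ht00]
      norm_num [kkR]
    · have hb0 : 0 < -Real.log (1 - t*t) := negLog_pos (mul_pos htpos htpos) htt1
      have hbY : (-Real.log (1 - t*t)) * (1 - t*t) ≤ t*t := negLog_mul_le htt1
      have hby : t*t ≤ -Real.log (1 - t*t) := le_negLog (by positivity) htt1
      set b := -Real.log (1 - t*t) with hbd
      clear_value b
      have hk0t : kkR 0 t = 1 := by unfold kkR; rw [if_pos (by ring : (0:ℝ)*t = 0)]
      have hk00 : kkR 0 0 = 1 := by unfold kkR; norm_num
      have hktt : kkR t t = b/(t*t) := by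
        rw [kkR_pos_eq t t htpos htpos, ← hbd]
      rw [hk0t, hk00, hktt,
        show (1:ℝ) - (0:ℝ)*(0:ℝ) = 1 by ring, Real.log_one, neg_zero, Real.sqrt_zero]
      have htt0 : (0:ℝ) < t*t := mul_pos htpos htpos
      have e : (1:ℝ)^2/(1*(b/(t*t))) = (t*t)/b := by
        field_simp
      rw [e]
      have h1 : b - t*t ≤ b*b := by
        have h2 : b*(t*t) ≤ b*b := mul_le_mul_of_nonneg_left hby hb0.le
        linarith only [hbY, h2]
      have harg : 1 - (t*t)/b ≤ (5*Real.sqrt b)^2 := by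
        have e2 : (5*Real.sqrt b)^2 = 25*b := by
          rw [mul_pow, Real.sq_sqrt hb0.le]; norm_num
        have h3 : 1 - (t*t)/b ≤ b := by
          have h4 : (b - t*t)/b ≤ b := by
            rw [div_le_iff₀ hb0]; linarith only [h1]
          have e3 : 1 - (t*t)/b = (b - t*t)/b := by field_simp
          linarith only [h4, e3]
        rw [e2]; linarith only [h3, hb0]
      calc Real.sqrt (1 - (t*t)/b) ≤ Real.sqrt ((5*Real.sqrt b)^2) :=
            Real.sqrt_le_sqrt harg
        _ = 5*Real.sqrt b := Real.sqrt_sq (by positivity)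
        _ = 5*(Real.sqrt b - 0) := by ring
  · -- s > 0
    have hc := core s t hs0 hst ht1
    have htpos : 0 < t := lt_of_lt_of_le hs0 hst
    have ha0 : 0 < -Real.log (1 - s*s) := negLog_pos (mul_pos hs0 hs0) hss1
    have hb0 : 0 < -Real.log (1 - t*t) := negLog_pos (mul_pos htpos htpos) htt1
    have hab : -Real.log (1 - s*s) ≤ -Real.log (1 - t*t) :=
      negLog_mono (by nlinarith) htt1
    have hratio : (kkR s t)^2/(kkR s s * kkR t t)
        = (-Real.log (1 - s*t))^2 /
          ((-Real.log (1 - s*s)) * (-Real.log (1 - t*t))) := by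
      have n1 : s*t ≠ 0 := by positivity
      have n2 : s*s ≠ 0 := by positivity
      have n3 : t*t ≠ 0 := by positivity
      have n4 : -Real.log (1-s*s) ≠ 0 := ne_of_gt ha0
      have n5 : -Real.log (1-t*t) ≠ 0 := ne_of_gt hb0
      have gen : ∀ X Y D : ℝ, D ≠ 0 → X/D/(Y/D) = X/Y := by
        intro X Y D hD
        rcases eq_or_ne Y 0 with rfl | hY
        · simp
        · field_simp
      rw [kkR_pos_eq s t hs0 htpos, kkR_pos_eq s s hs0 hs0, kkR_pos_eq t t htpos htpos]
      have e1 : ((-Real.log (1 - s*t))/(s*t))^2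
          = (-Real.log (1 - s*t))^2/((s*s)*(t*t)) := by
        rw [div_pow]; congr 1; ring
      rw [e1, div_mul_div_comm,
        gen _ _ _ (mul_ne_zero n2 n3)]
    rw [hratio]
    have hBA0 : 0 ≤ Real.sqrt (-Real.log (1 - t*t)) - Real.sqrt (-Real.log (1 - s*s)) :=
      sub_nonneg.mpr (Real.sqrt_le_sqrt hab)
    calc Real.sqrt (1 - (-Real.log (1 - s*t))^2 /
          ((-Real.log (1 - s*s)) * (-Real.log (1 - t*t))))
        ≤ Real.sqrt ((5*(Real.sqrt (-Real.log (1 - t*t))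
            - Real.sqrt (-Real.log (1 - s*s))))^2) := by
          apply Real.sqrt_le_sqrt
          have e4 : (5*(Real.sqrt (-Real.log (1 - t*t))
              - Real.sqrt (-Real.log (1 - s*s))))^2
            = 25*(Real.sqrt (-Real.log (1 - t*t))
              - Real.sqrt (-Real.log (1 - s*s)))^2 := by ring
          linarith only [hc, e4]
      _ = 5*(Real.sqrt (-Real.log (1 - t*t)) - Real.sqrt (-Real.log (1 - s*s))) :=
          Real.sqrt_sq (by positivity)

end DirichletProof

/-- There is `M ∈ (0,∞)` such that for all `r ∈ [0,1)`, the curve `γ_r : [0,r] → 𝔻, t ↦ t`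
satisfies `ℓ_δ(γ_r) ≤ M·(log(1/(1−r)))^{1/2}` for the Dirichlet metric `δ`. -/
theorem dirichlet_length_bound :
    ∃ M : ℝ, 0 < M ∧ ∀ r : ℝ, 0 ≤ r → r < 1 →
      curveLen dirDelta 0 r (fun t : ℝ => (t : ℂ)) ≤
        ENNReal.ofReal (M * Real.sqrt (Real.log (1 / (1 - r)))) := by
  refine ⟨5, by norm_num, ?_⟩
  intro r hr0 hr1
  apply sSup_le
  rintro L ⟨n, tt, ht0, htn, hmono, rfl⟩
  set F : ℝ → ℝ := fun v => Real.sqrt (-Real.log (1 - v*v)) with hF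
  have hmono' : ∀ i j, i ≤ j → j ≤ n → tt i ≤ tt j := by
    intro i j hij hjn
    induction j with
    | zero =>
      have : i = 0 := Nat.le_zero.mp hij
      rw [this]
    | succ m ih =>
      rcases Nat.lt_succ_iff_lt_or_eq.mp (Nat.lt_succ_of_le hij) with h | h
      · exact le_trans (ih (Nat.lt_succ_iff.mp h) (by omega))
          (le_of_lt (hmono m (by omega)))
      · rw [h]
  have hlow : ∀ i, i ≤ n → 0 ≤ tt i := by
    intro i hi
    have := hmono' 0 i (Nat.zero_le _) hi
    rw [ht0] at this
    exact this
  have hhigh : ∀ i, i ≤ n → tt i ≤ r := by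
    intro i hi
    have := hmono' i n hi le_rfl
    rw [htn] at this
    exact this
  have hFmono : ∀ i, i < n → F (tt i) ≤ F (tt (i+1)) := by
    intro i hi
    apply Real.sqrt_le_sqrt
    apply DirichletProof.negLog_mono
    · have h1 := hlow i hi.le
      have h2 := (hmono i hi).le
      nlinarith
    · have h3 := hhigh (i+1) hi
      have h4 := hlow (i+1) hi
      nlinarith
  calc ∑ i ∈ Finset.range n, ENNReal.ofReal (dirDelta ((tt i : ℝ) : ℂ) ((tt (i+1) : ℝ) : ℂ))
      ≤ ∑ i ∈ Finset.range n, ENNReal.ofReal (5*F (tt (i+1)) - 5*F (tt i)) := by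
        apply Finset.sum_le_sum
        intro i hi
        have hi' := Finset.mem_range.mp hi
        apply ENNReal.ofReal_le_ofReal
        have hk := DirichletProof.key (tt i) (tt (i+1)) (hlow i hi'.le)
          (hmono i hi').le (lt_of_le_of_lt (hhigh (i+1) hi') hr1)
        rw [hF]
        simp only []
        linarith [hk]
    _ = ENNReal.ofReal (∑ i ∈ Finset.range n, (5*F (tt (i+1)) - 5*F (tt i))) := by
        rw [ENNReal.ofReal_sum_of_nonneg]
        intro i hi
        have := hFmono i (Finset.mem_range.mp hi)
        linarith
    _ = ENNReal.ofReal (5*F (tt n) - 5*F (tt 0)) := by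
        rw [Finset.sum_range_sub (fun i => 5*F (tt i))]
    _ ≤ ENNReal.ofReal (5 * Real.sqrt (Real.log (1 / (1 - r)))) := by
        apply ENNReal.ofReal_le_ofReal
        rw [ht0, htn]
        have hF0 : F 0 = 0 := by
          rw [hF]; norm_num
        have hFr : F r ≤ Real.sqrt (Real.log (1/(1-r))) := by
          rw [hF, one_div, Real.log_inv]
          apply Real.sqrt_le_sqrt
          have : -Real.log (1 - r*r) ≤ -Real.log (1 - r) :=
            DirichletProof.negLog_mono (by nlinarith) hr1
          linarith
        linarith [hF0, hFr]
end

section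
/- Let 0 < r < 1, let 0 ≤ θ₁ < θ₂ < … < θₙ ≤ π, let D = {r·e^{iθ₁}, …, r·e^{iθₙ}} ⊂ 𝔻, and let ε > 0. Then δ(x,y) ≥ ε for all distinct x, y ∈ D if and only if δ(r·e^{iθ_k}, r·e^{iθ_{k+1}}) ≥ ε for all 1 ≤ k ≤ n−1, where δ is the Dirichlet metric. -/
open Complex Real

/-! ### Auxiliary development -/

lemma key_ineq {s b : ℝ} (hs : 0 < s) (hb0 : 0 ≤ b) (hb : b < π/2) :
    Real.sin b * Real.log s ≤ b * (s - Real.cos b) := by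
  have hbpi : b ≤ π := le_trans hb.le (by linarith [Real.pi_pos])
  have hsin : 0 ≤ Real.sin b := Real.sin_nonneg_of_nonneg_of_le_pi hb0 hbpi
  have h1 : Real.log s ≤ s - 1 := Real.log_le_sub_one_of_pos hs
  have h2 : Real.sin b * Real.log s ≤ Real.sin b * (s - 1) :=
    mul_le_mul_of_nonneg_left h1 hsin
  have hsb : Real.sin b ≤ b := Real.sin_le hb0
  have hbc : b * Real.cos b ≤ Real.sin b := by
    rcases eq_or_lt_of_le hb0 with h | h
    · simp [← h]
    · have hcos : 0 < Real.cos b := Real.cos_pos_of_mem_Ioo ⟨by linarith [Real.pi_pos], hb⟩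
      have := Real.lt_tan h hb
      rw [Real.tan_eq_sin_div_cos, lt_div_iff₀ hcos] at this
      linarith
  nlinarith [mul_nonneg hs.le (sub_nonneg.2 hsb)]

noncomputable def wfun (ρ t : ℝ) : ℂ := 1 - (ρ:ℂ) * Complex.exp ((t:ℂ) * Complex.I)

noncomputable def Hfun (ρ t : ℝ) : ℝ := Complex.normSq (Complex.log (wfun ρ t))

lemma wfun_re (ρ t : ℝ) : (wfun ρ t).re = 1 - ρ * Real.cos t := by
  simp [wfun, Complex.exp_ofReal_mul_I_re]

lemma wfun_im (ρ t : ℝ) : (wfun ρ t).im = -(ρ * Real.sin t) := by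
  simp [wfun, Complex.exp_ofReal_mul_I_im]

lemma wfun_re_pos {ρ : ℝ} (hρ0 : 0 ≤ ρ) (hρ1 : ρ < 1) (t : ℝ) : 0 < (wfun ρ t).re := by
  rw [wfun_re]
  nlinarith [Real.cos_le_one t, Real.neg_one_le_cos t]

lemma wfun_slit {ρ : ℝ} (hρ0 : 0 ≤ ρ) (hρ1 : ρ < 1) (t : ℝ) : wfun ρ t ∈ Complex.slitPlane :=
  Or.inl (wfun_re_pos hρ0 hρ1 t)

lemma wfun_ne {ρ : ℝ} (hρ0 : 0 ≤ ρ) (hρ1 : ρ < 1) (t : ℝ) : wfun ρ t ≠ 0 :=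
  Complex.slitPlane_ne_zero (wfun_slit hρ0 hρ1 t)

lemma hasDerivAt_wfun (ρ t : ℝ) :
    HasDerivAt (wfun ρ) (-((ρ:ℂ) * Complex.I * Complex.exp ((t:ℂ) * Complex.I))) t := by
  have h1 : HasDerivAt (fun s : ℝ => (s:ℂ) * Complex.I) Complex.I t := by
    simpa using (Complex.ofRealCLM.hasDerivAt (x := t)).mul_const Complex.I
  have h2 : HasDerivAt (fun s : ℝ => Complex.exp ((s:ℂ) * Complex.I))
      (Complex.exp ((t:ℂ) * Complex.I) * Complex.I) t := h1.cexp
  have h3 := (h2.const_mul (ρ:ℂ)).const_sub 1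
  exact h3.congr_deriv (by ring)

lemma hasDerivAt_logw {ρ : ℝ} (hρ0 : 0 ≤ ρ) (hρ1 : ρ < 1) (t : ℝ) :
    HasDerivAt (fun s => Complex.log (wfun ρ s))
      (-((ρ:ℂ) * Complex.I * Complex.exp ((t:ℂ) * Complex.I)) / wfun ρ t) t :=
  (hasDerivAt_wfun ρ t).clog_real (wfun_slit hρ0 hρ1 t)

lemma hasDerivAt_Hfun {ρ : ℝ} (hρ0 : 0 ≤ ρ) (hρ1 : ρ < 1) (t : ℝ) :
    HasDerivAt (Hfun ρ)
      (2 * ((Complex.log (wfun ρ t)).re *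
          (-((ρ:ℂ) * Complex.I * Complex.exp ((t:ℂ) * Complex.I)) / wfun ρ t).re
        + (Complex.log (wfun ρ t)).im *
          (-((ρ:ℂ) * Complex.I * Complex.exp ((t:ℂ) * Complex.I)) / wfun ρ t).im)) t := by
  have hg := hasDerivAt_logw hρ0 hρ1 t
  have hre : HasDerivAt (fun s => (Complex.log (wfun ρ s)).re)
      ((-((ρ:ℂ) * Complex.I * Complex.exp ((t:ℂ) * Complex.I)) / wfun ρ t).re) t :=
    (Complex.reCLM.hasFDerivAt.comp_hasDerivAt t hg)
  have him : HasDerivAt (fun s => (Complex.log (wfun ρ s)).im)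
      ((-((ρ:ℂ) * Complex.I * Complex.exp ((t:ℂ) * Complex.I)) / wfun ρ t).im) t :=
    (Complex.imCLM.hasFDerivAt.comp_hasDerivAt t hg)
  have heq : Hfun ρ = fun s => (Complex.log (wfun ρ s)).re * (Complex.log (wfun ρ s)).re
      + (Complex.log (wfun ρ s)).im * (Complex.log (wfun ρ s)).im := by
    funext s; simp [Hfun, Complex.normSq_apply]
  rw [heq]
  have := (hre.mul hre).add (him.mul him)
  exact this.congr_deriv (by ring)

lemma Hfun_deriv_expr_nonpos {ρ : ℝ} (hρ0 : 0 < ρ) (hρ1 : ρ < 1) {t : ℝ}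
    (ht0 : 0 < t) (htπ : t < π) :
    2 * ((Complex.log (wfun ρ t)).re *
          (-((ρ:ℂ) * Complex.I * Complex.exp ((t:ℂ) * Complex.I)) / wfun ρ t).re
        + (Complex.log (wfun ρ t)).im *
          (-((ρ:ℂ) * Complex.I * Complex.exp ((t:ℂ) * Complex.I)) / wfun ρ t).im) ≤ 0 := by
  have hwne : wfun ρ t ≠ 0 := wfun_ne hρ0.le hρ1 t
  have hwre : 0 < (wfun ρ t).re := wfun_re_pos hρ0.le hρ1 t
  set w := wfun ρ t with hw
  set z : ℂ := -((ρ:ℂ) * Complex.I * Complex.exp ((t:ℂ) * Complex.I)) with hz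
  have hS : 0 < Complex.normSq w := Complex.normSq_pos.2 hwne
  have hA : 0 < ‖w‖ := norm_pos_iff.mpr hwne
  have hzre : z.re = ρ * Real.sin t := by
    simp [hz, Complex.mul_re, Complex.mul_im, Complex.exp_ofReal_mul_I_re,
      Complex.exp_ofReal_mul_I_im]
  have hzim : z.im = -(ρ * Real.cos t) := by
    simp [hz, Complex.mul_re, Complex.mul_im, Complex.exp_ofReal_mul_I_re,
      Complex.exp_ofReal_mul_I_im]
  have hsint : 0 < Real.sin t := Real.sin_pos_of_pos_of_lt_pi ht0 htπ
  have e1 : (z / w).re = (ρ * Real.sin t) / Complex.normSq w := by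
    rw [Complex.div_re, hzre, hzim, hw, wfun_re, wfun_im]
    ring
  have e2 : (z / w).im = (Complex.normSq w - w.re) / Complex.normSq w := by
    rw [Complex.div_im, hzre, hzim]
    have hSe : Complex.normSq w = w.re * w.re + w.im * w.im := Complex.normSq_apply w
    rw [hSe, hw, wfun_re, wfun_im]
    ring
  have haneg : Complex.arg w < 0 := Complex.arg_neg_iff.2 (by rw [hw, wfun_im]; nlinarith)
  have hb2 : -Complex.arg w < π / 2 := by
    have := Complex.abs_arg_lt_pi_div_two_iff.2 (Or.inl hwre)
    rw [abs_lt] at this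
    linarith [this.1]
  have hsinb : Real.sin (-Complex.arg w) = ρ * Real.sin t / ‖w‖ := by
    rw [Real.sin_neg, Complex.sin_arg, hw, wfun_im]
    field_simp
  have hcosb : Real.cos (-Complex.arg w) = w.re / ‖w‖ := by
    rw [Real.cos_neg, Complex.cos_arg hwne]
  have key : Real.sin (-Complex.arg w) * Real.log (‖w‖)
      ≤ (-Complex.arg w) * (‖w‖ - Real.cos (-Complex.arg w)) :=
    key_ineq hA (by linarith) hb2
  rw [hsinb, hcosb] at key
  have hSA : Complex.normSq w = ‖w‖ * ‖w‖ := by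
    rw [Complex.normSq_eq_norm_sq]; ring
  have key2 : ρ * Real.sin t * Real.log (‖w‖)
      + Complex.arg w * (Complex.normSq w - w.re) ≤ 0 := by
    have hmul := mul_le_mul_of_nonneg_left key hA.le
    have l1 : ‖w‖ * (ρ * Real.sin t / ‖w‖ * Real.log (‖w‖))
        = ρ * Real.sin t * Real.log (‖w‖) := by
      field_simp
    have l2 : ‖w‖ * (-w.arg * (‖w‖ - w.re / ‖w‖))
        = -w.arg * (Complex.normSq w - w.re) := by
      rw [hSA]; field_simp
    rw [l1, l2] at hmul
    linarith
  rw [e1, e2, Complex.log_re, Complex.log_im]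
  have heq : Real.log (‖w‖) * (ρ * Real.sin t / Complex.normSq w)
      + Complex.arg w * ((Complex.normSq w - w.re) / Complex.normSq w)
      = (ρ * Real.sin t * Real.log (‖w‖)
        + Complex.arg w * (Complex.normSq w - w.re)) / Complex.normSq w := by
    ring
  rw [heq]
  have := div_nonpos_of_nonpos_of_nonneg key2 hS.le
  linarith

lemma Hfun_anti {ρ : ℝ} (hρ0 : 0 < ρ) (hρ1 : ρ < 1) : AntitoneOn (Hfun ρ) (Set.Icc 0 π) := by
  have hdiff : Differentiable ℝ (Hfun ρ) :=
    fun t => (hasDerivAt_Hfun hρ0.le hρ1 t).differentiableAt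
  apply antitoneOn_of_deriv_nonpos (convex_Icc 0 π) hdiff.continuous.continuousOn
    hdiff.differentiableOn
  intro x hx
  rw [interior_Icc] at hx
  rw [(hasDerivAt_Hfun hρ0.le hρ1 x).deriv]
  exact Hfun_deriv_expr_nonpos hρ0 hρ1 hx.1 hx.2

lemma conj_pt (r t : ℝ) :
    (starRingEnd ℂ) ((r:ℂ) * Complex.exp ((t:ℂ) * Complex.I))
      = (r:ℂ) * Complex.exp (-((t:ℂ) * Complex.I)) := by
  rw [map_mul, Complex.conj_ofReal, ← Complex.exp_conj]
  congr 1
  simp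

lemma mul_conj_pt (r s t : ℝ) :
    ((r:ℂ) * Complex.exp ((s:ℂ) * Complex.I)) *
      (starRingEnd ℂ) ((r:ℂ) * Complex.exp ((t:ℂ) * Complex.I))
      = ((r^2 : ℝ):ℂ) * Complex.exp (((s - t : ℝ):ℂ) * Complex.I) := by
  rw [conj_pt]
  rw [show ((r:ℂ) * Complex.exp ((s:ℂ) * Complex.I)) * ((r:ℂ) * Complex.exp (-((t:ℂ) * Complex.I)))
    = ((r:ℂ) * (r:ℂ)) * (Complex.exp ((s:ℂ) * Complex.I) * Complex.exp (-((t:ℂ) * Complex.I)))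
      from by ring]
  rw [← Complex.exp_add]
  push_cast
  ring_nf

lemma one_sub_eq_wfun (r s t : ℝ) :
    1 - ((r^2 : ℝ):ℂ) * Complex.exp (((s - t : ℝ):ℂ) * Complex.I) = wfun (r^2) (s - t) := rfl

lemma abs_dirK_sq {r : ℝ} (hr0 : 0 < r) (hr1 : r < 1) (s t : ℝ) :
    ‖dirK ((r:ℂ) * Complex.exp ((s:ℂ) * Complex.I))
      ((r:ℂ) * Complex.exp ((t:ℂ) * Complex.I))‖ ^ 2
      = Hfun (r^2) (s - t) / (r^2)^2 := by
  have hρ0 : (0:ℝ) ≤ r^2 := sq_nonneg r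
  have hρ1 : r^2 < 1 := by nlinarith
  have hune : ((r^2 : ℝ):ℂ) * Complex.exp (((s - t : ℝ):ℂ) * Complex.I) ≠ 0 := by
    apply mul_ne_zero
    · simpa using by positivity
    · exact Complex.exp_ne_zero _
  rw [dirK, mul_conj_pt, if_neg hune, one_sub_eq_wfun]
  rw [one_div, one_div, Complex.log_inv _ (Complex.slitPlane_arg_ne_pi (wfun_slit hρ0 hρ1 _))]
  rw [norm_mul, norm_inv, norm_neg]
  rw [norm_mul, Complex.norm_real, Real.norm_eq_abs, Complex.norm_exp_ofReal_mul_I]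
  rw [_root_.abs_of_nonneg hρ0, mul_one, mul_pow, inv_pow, Complex.sq_norm]
  show ((r^2)^2)⁻¹ * Hfun (r^2) (s-t) = _
  rw [div_eq_mul_inv]
  ring

lemma dirK_diag_re {r : ℝ} (hr0 : 0 < r) (hr1 : r < 1) (s : ℝ) :
    (dirK ((r:ℂ) * Complex.exp ((s:ℂ) * Complex.I))
      ((r:ℂ) * Complex.exp ((s:ℂ) * Complex.I))).re
      = -Real.log (1 - r^2) / r^2 := by
  have h2 : (0:ℝ) < 1 - r^2 := by nlinarith
  have hune : ((r^2 : ℝ):ℂ) * Complex.exp (((s - s : ℝ):ℂ) * Complex.I) ≠ 0 := by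
    apply mul_ne_zero
    · simpa using by positivity
    · exact Complex.exp_ne_zero _
  rw [dirK, mul_conj_pt, if_neg hune]
  have h0 : ((r^2 : ℝ):ℂ) * Complex.exp (((s - s : ℝ):ℂ) * Complex.I) = ((r^2:ℝ):ℂ) := by
    simp
  rw [h0]
  have h1 : (1:ℂ) - ((r^2:ℝ):ℂ) = ((1 - r^2 : ℝ):ℂ) := by push_cast; ring
  rw [h1]
  have h3 : (1:ℂ) / ((1 - r^2 : ℝ):ℂ) = (((1 - r^2 : ℝ)⁻¹ : ℝ):ℂ) := by
    push_cast; rw [one_div]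
  rw [h3, ← Complex.ofReal_log (by positivity)]
  have h4 : (1:ℂ) / ((r^2:ℝ):ℂ) = (((r^2:ℝ)⁻¹ : ℝ):ℂ) := by push_cast; rw [one_div]
  rw [h4, ← Complex.ofReal_mul, Complex.ofReal_re, Real.log_inv]
  field_simp

lemma Hfun_even {ρ : ℝ} (hρ0 : 0 ≤ ρ) (hρ1 : ρ < 1) (t : ℝ) : Hfun ρ (-t) = Hfun ρ t := by
  have hconj : wfun ρ (-t) = (starRingEnd ℂ) (wfun ρ t) := by
    apply Complex.ext
    · simp [wfun_re, Complex.conj_re]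
    · simp [wfun_im, Complex.conj_im]
  rw [Hfun, hconj, Complex.log_conj _ (Complex.slitPlane_arg_ne_pi (wfun_slit hρ0 hρ1 t)),
    Complex.normSq_conj]
  rfl

lemma dirDelta_formula {r : ℝ} (hr0 : 0 < r) (hr1 : r < 1) (s t : ℝ) :
    dirDelta ((r:ℂ) * Complex.exp ((s:ℂ) * Complex.I)) ((r:ℂ) * Complex.exp ((t:ℂ) * Complex.I))
      = Real.sqrt (1 - Hfun (r^2) (s - t) / (Real.log (1 - r^2))^2) := by
  have h2 : (0:ℝ) < 1 - r^2 := by nlinarith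
  have hΛ : Real.log (1 - r^2) < 0 := Real.log_neg (by positivity) (by nlinarith)
  rw [dirDelta, abs_dirK_sq hr0 hr1, dirK_diag_re hr0 hr1, dirK_diag_re hr0 hr1]
  congr 1
  have hr2 : (r:ℝ)^2 ≠ 0 := by positivity
  have hL : Real.log (1 - r^2) ≠ 0 := hΛ.ne
  field_simp

/-- For `0 < r < 1`, angles `0 ≤ θ₀ < θ₁ < … < θ_{n−1} ≤ π` and the points
`xₖ = r·e^{iθₖ}`, the set `{x₀, …, x_{n−1}}` is `ε`-separated in the Dirichlet metric if
and only if consecutive points are at Dirichlet distance at least `ε`. -/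
theorem circle_separated_iff_adjacent (r : ℝ) (hr0 : 0 < r) (hr1 : r < 1)
    (n : ℕ) (θ : ℕ → ℝ) (hθ0 : ∀ i, i < n → 0 ≤ θ i ∧ θ i ≤ π)
    (hθmono : ∀ i j, i < j → j < n → θ i < θ j) (ε : ℝ) (hε : 0 < ε) :
    (∀ i j, i < n → j < n → i ≠ j →
        ε ≤ dirDelta ((r : ℂ) * Complex.exp ((θ i : ℂ) * Complex.I))
              ((r : ℂ) * Complex.exp ((θ j : ℂ) * Complex.I))) ↔
      (∀ k, k + 1 < n →
        ε ≤ dirDelta ((r : ℂ) * Complex.exp ((θ k : ℂ) * Complex.I))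
              ((r : ℂ) * Complex.exp ((θ (k + 1) : ℂ) * Complex.I))) := by
  have hρ0 : (0:ℝ) < r^2 := by positivity
  have hρ1 : r^2 < 1 := by nlinarith
  have hΛ : Real.log (1 - r^2) < 0 := Real.log_neg (by nlinarith) (by nlinarith)
  have hΛ2 : 0 < (Real.log (1 - r^2))^2 := by nlinarith
  constructor
  · intro h k hk
    exact h k (k+1) (by omega) hk (by omega)
  · intro h
    have aux : ∀ i j, i < j → j < n →
        ε ≤ dirDelta ((r : ℂ) * Complex.exp ((θ i : ℂ) * Complex.I))
              ((r : ℂ) * Complex.exp ((θ j : ℂ) * Complex.I)) := by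
      intro i j hij hj
      have hi : i < n := lt_trans hij hj
      have hi1 : i + 1 < n := by omega
      have hadj := h i hi1
      rw [dirDelta_formula hr0 hr1] at hadj ⊢
      have e1 : Hfun (r^2) (θ i - θ (i+1)) = Hfun (r^2) (θ (i+1) - θ i) := by
        rw [show θ i - θ (i+1) = -(θ (i+1) - θ i) by ring, Hfun_even hρ0.le hρ1]
      have e2 : Hfun (r^2) (θ i - θ j) = Hfun (r^2) (θ j - θ i) := by
        rw [show θ i - θ j = -(θ j - θ i) by ring, Hfun_even hρ0.le hρ1]
      rw [e1] at hadj
      rw [e2]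
      have hθi0 := (hθ0 i hi).1
      have hθjπ := (hθ0 j hj).2
      have hθi1π := (hθ0 (i+1) hi1).2
      have hmono1 : θ i < θ (i+1) := hθmono i (i+1) (by omega) hi1
      have hmono2 : θ (i+1) ≤ θ j := by
        rcases eq_or_lt_of_le (Nat.succ_le_of_lt hij) with hh | hh
        · exact le_of_eq (congrArg θ hh)
        · exact (hθmono (i+1) j hh hj).le
      have hm1 : θ (i+1) - θ i ∈ Set.Icc (0:ℝ) π := ⟨by linarith, by linarith⟩
      have hm2 : θ j - θ i ∈ Set.Icc (0:ℝ) π := ⟨by linarith, by linarith⟩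
      have hH : Hfun (r^2) (θ j - θ i) ≤ Hfun (r^2) (θ (i+1) - θ i) :=
        Hfun_anti hρ0 hρ1 hm1 hm2 (by linarith)
      refine le_trans hadj (Real.sqrt_le_sqrt ?_)
      have hdiv : Hfun (r^2) (θ j - θ i) / (Real.log (1 - r^2))^2
          ≤ Hfun (r^2) (θ (i+1) - θ i) / (Real.log (1 - r^2))^2 := by gcongr
      linarith
    intro i j hi hj hij
    rcases lt_or_gt_of_ne hij with hlt | hgt
    · exact aux i j hlt hj
    · have hsymm : dirDelta ((r : ℂ) * Complex.exp ((θ i : ℂ) * Complex.I))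
          ((r : ℂ) * Complex.exp ((θ j : ℂ) * Complex.I))
          = dirDelta ((r : ℂ) * Complex.exp ((θ j : ℂ) * Complex.I))
          ((r : ℂ) * Complex.exp ((θ i : ℂ) * Complex.I)) := by
        rw [dirDelta_formula hr0 hr1, dirDelta_formula hr0 hr1,
          show θ i - θ j = -(θ j - θ i) by ring, Hfun_even hρ0.le hρ1]
      rw [hsymm]
      exact aux j i hgt hi
end

section
/- For every fixed s ∈ (0,1), the function t ↦ |log(1 − s·e^{it})| is nonincreasing on the interval [0, π], where log denotes the principal branch of the complex logarithm (note Re(1 − s·e^{it}) > 0). -/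
open Complex Real

/-- Tangent-line inequality for `log ∘ sin`, proved via monotonicity of
`x ↦ log (sin x) - x * (cos ψ / sin ψ)` on `[t, ψ] ⊆ (0, π)`. -/
lemma logsin_tangent {t ψ : ℝ} (ht : 0 < t) (htψ : t ≤ ψ) (hψ : ψ < π) :
    Real.log (Real.sin t) + (ψ - t) * (Real.cos ψ / Real.sin ψ) ≤ Real.log (Real.sin ψ) := by
  set c : ℝ := Real.cos ψ / Real.sin ψ with hc
  have hsinpos : ∀ x ∈ Set.Icc t ψ, 0 < Real.sin x := fun x hx =>
    Real.sin_pos_of_pos_of_lt_pi (lt_of_lt_of_le ht hx.1) (lt_of_le_of_lt hx.2 hψ)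
  have hd : ∀ x ∈ Set.Icc t ψ,
      HasDerivAt (fun x => Real.log (Real.sin x) - x * c)
        (Real.cos x / Real.sin x - 1 * c) x := by
    intro x hx
    exact ((Real.hasDerivAt_sin x).log (ne_of_gt (hsinpos x hx))).sub
      ((hasDerivAt_id x).mul_const c)
  have hmono : MonotoneOn (fun x => Real.log (Real.sin x) - x * c) (Set.Icc t ψ) := by
    apply monotoneOn_of_deriv_nonneg (convex_Icc t ψ)
    · exact fun x hx => ((hd x hx).continuousAt).continuousWithinAt
    · intro x hx
      rw [interior_Icc] at hx
      exact ((hd x (Set.mem_Icc_of_Ioo hx)).differentiableAt).differentiableWithinAt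
    · intro x hx
      rw [interior_Icc] at hx
      rw [(hd x (Set.mem_Icc_of_Ioo hx)).deriv]
      have hsx : 0 < Real.sin x := hsinpos x (Set.mem_Icc_of_Ioo hx)
      have hsψ : 0 < Real.sin ψ := hsinpos ψ (Set.right_mem_Icc.2 htψ)
      have hsub : 0 ≤ Real.sin (ψ - x) :=
        Real.sin_nonneg_of_nonneg_of_le_pi (by linarith [hx.2]) (by linarith [hx.1, ht])
      rw [Real.sin_sub] at hsub
      rw [one_mul, hc, sub_nonneg, div_le_div_iff₀ hsψ hsx]
      nlinarith
  have h1 : t ∈ Set.Icc t ψ := Set.left_mem_Icc.2 htψ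
  have h2 : ψ ∈ Set.Icc t ψ := Set.right_mem_Icc.2 htψ
  have := hmono h1 h2 htψ
  have hsψ : 0 < Real.sin ψ := hsinpos ψ h2
  simp only at this
  have : Real.log (Real.sin t) - t * c ≤ Real.log (Real.sin ψ) - ψ * c := this
  nlinarith [this]

set_option maxHeartbeats 2000000 in
/-- For fixed `s ∈ (0,1)`, the function `t ↦ |log(1 − s·e^{it})|` is nonincreasing on
`[0, π]`, where `log` is the principal branch of the complex logarithm. -/
theorem abs_log_antitone (s : ℝ) (hs : s ∈ Set.Ioo (0 : ℝ) 1) :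
    AntitoneOn (fun t : ℝ =>
        ‖Complex.log (1 - (s : ℂ) * Complex.exp ((t : ℂ) * Complex.I))‖)
      (Set.Icc 0 π) := by
  obtain ⟨hs0, hs1⟩ := hs
  set w : ℝ → ℂ := fun t => 1 - (s : ℂ) * Complex.exp ((t : ℂ) * Complex.I) with hwdef
  have hwre : ∀ t : ℝ, (w t).re = 1 - s * Real.cos t := by
    intro t; simp [hwdef, Complex.exp_ofReal_mul_I_re, Complex.exp_ofReal_mul_I_im]
  have hwim : ∀ t : ℝ, (w t).im = -(s * Real.sin t) := by
    intro t; simp [hwdef, Complex.exp_ofReal_mul_I_re, Complex.exp_ofReal_mul_I_im]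
  have hrepos : ∀ t : ℝ, 0 < (w t).re := by
    intro t
    rw [hwre]
    nlinarith [Real.cos_le_one t, Real.neg_one_le_cos t]
  have hslit : ∀ t : ℝ, w t ∈ Complex.slitPlane := fun t => Or.inl (hrepos t)
  have hw0 : ∀ t : ℝ, w t ≠ 0 := fun t => Complex.slitPlane_ne_zero (hslit t)
  -- derivative of w
  have hderivw : ∀ t : ℝ, HasDerivAt w (-((s : ℂ) * (Complex.exp ((t : ℂ) * I) * (1 * I)))) t := by
    intro t
    have h1 : HasDerivAt (fun t : ℝ => ((t : ℂ) * I)) (1 * I) t :=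
      ((hasDerivAt_id t).ofReal_comp).mul_const I
    exact (((h1.cexp).const_mul (s : ℂ)).const_sub 1)
  -- derivative of log ∘ w
  have hlogd : ∀ t : ℝ, HasDerivAt (fun t => Complex.log (w t))
      (-((s : ℂ) * (Complex.exp ((t : ℂ) * I) * (1 * I))) / w t) t := by
    intro t
    exact (hderivw t).clog_real (hslit t)
  -- F = normSq (log w)
  set g : ℝ → ℂ := fun t => Complex.log (w t) with hgdef
  set F : ℝ → ℝ := fun t => Complex.normSq (g t) with hFdef
  set D : ℝ → ℂ := fun t => -((s : ℂ) * (Complex.exp ((t : ℂ) * I) * (1 * I))) / w t with hDdef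
  have hgre : ∀ t : ℝ, HasDerivAt (fun t => (g t).re) ((D t).re) t := fun t =>
    Complex.reCLM.hasFDerivAt.comp_hasDerivAt t (hlogd t)
  have hgim : ∀ t : ℝ, HasDerivAt (fun t => (g t).im) ((D t).im) t := fun t =>
    Complex.imCLM.hasFDerivAt.comp_hasDerivAt t (hlogd t)
  have hFderiv : ∀ t : ℝ, HasDerivAt F
      ((D t).re * (g t).re + (g t).re * (D t).re + ((D t).im * (g t).im + (g t).im * (D t).im)) t := by
    intro t
    have : F = fun t => (g t).re * (g t).re + (g t).im * (g t).im := by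
      funext x; simp [hFdef, Complex.normSq_apply]
    rw [this]
    exact ((hgre t).mul (hgre t)).add ((hgim t).mul (hgim t))
  -- Antitone of F
  have hFanti : AntitoneOn F (Set.Icc 0 π) := by
    apply antitoneOn_of_deriv_nonpos (convex_Icc 0 π)
    · exact fun t _ => (hFderiv t).continuousAt.continuousWithinAt
    · intro t _
      exact (hFderiv t).differentiableAt.differentiableWithinAt
    · intro t ht
      rw [interior_Icc] at ht
      rw [(hFderiv t).deriv]
      obtain ⟨ht0, htπ⟩ := ht
      have hσ : 0 < Real.sin t := Real.sin_pos_of_pos_of_lt_pi ht0 htπ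
      set σ : ℝ := Real.sin t with hσdef
      set c : ℝ := Real.cos t with hcdef
      set R : ℝ := ‖w t‖ with hRdef
      have hR : 0 < R := norm_pos_iff.mpr (hw0 t)
      set A : ℝ := Complex.arg (w t) with hAdef
      set L : ℝ := Real.log R with hLdef
      -- arg bounds
      have hAneg : A < 0 := Complex.arg_neg_iff.2 (by rw [hwim]; nlinarith)
      have hAgt : -(π / 2) < A := by
        have := Complex.abs_arg_lt_pi_div_two_iff.2 (Or.inl (hrepos t))
        rw [abs_lt] at this
        exact this.1
      set ψ : ℝ := t - A with hψdef
      have htψ : t < ψ := by simp [hψdef]; linarith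
      have hcosA : Real.cos A = (1 - s * c) / R := by
        rw [hAdef, Complex.cos_arg (hw0 t), hwre]
      have hsinA : Real.sin A = -(s * σ) / R := by
        rw [hAdef, Complex.sin_arg, hwim]
      have hsinψ : Real.sin ψ = σ / R := by
        rw [hψdef, Real.sin_sub, hcosA, hsinA]
        field_simp
        ring
      have hcosψ : Real.cos ψ = (c - s) / R := by
        rw [hψdef, Real.cos_sub, hcosA, hsinA]
        have hpyth : σ ^ 2 + c ^ 2 = 1 := by
          rw [hσdef, hcdef]; exact Real.sin_sq_add_cos_sq t
        field_simp
        nlinarith [hpyth]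
      have hsψpos : 0 < Real.sin ψ := by rw [hsinψ]; positivity
      have hψπ : ψ < π := by
        by_contra h
        push_neg at h
        have h2 : ψ - π ≤ π := by linarith [Real.pi_gt_three]
        have : 0 ≤ Real.sin (ψ - π) := Real.sin_nonneg_of_nonneg_of_le_pi (by linarith) h2
        rw [Real.sin_sub_pi] at this
        linarith
      -- L = log σ - log sin ψ
      have hL : L = Real.log σ - Real.log (Real.sin ψ) := by
        rw [hLdef, ← Real.log_div (ne_of_gt hσ) (ne_of_gt hsψpos)]
        congr 1
        rw [hsinψ]
        field_simp
      -- key inequality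
      have hkey := logsin_tangent ht0 htψ.le hψπ
      -- compute D re and im
      have hnsq : Complex.normSq (w t) = R ^ 2 := by
        rw [hRdef, Complex.sq_norm]
      have hnum_re : (-((s : ℂ) * (Complex.exp ((t : ℂ) * I) * (1 * I)))).re = s * σ := by
        simp [Complex.exp_ofReal_mul_I_re, Complex.exp_ofReal_mul_I_im, hσdef]
      have hnum_im : (-((s : ℂ) * (Complex.exp ((t : ℂ) * I) * (1 * I)))).im = -(s * c) := by
        simp [Complex.exp_ofReal_mul_I_re, Complex.exp_ofReal_mul_I_im, hcdef]
      have h1 : σ ^ 2 + c ^ 2 = 1 := by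
        rw [hσdef, hcdef]; exact Real.sin_sq_add_cos_sq t
      have hDre : (D t).re = s * σ / R ^ 2 := by
        rw [hDdef]
        simp only [Complex.div_re]
        rw [hnum_re, hnum_im, hwre, hwim, hnsq, ← hσdef, ← hcdef, ← add_div]
        congr 1
        linear_combination (s ^ 2 : ℝ) * h1 - s ^ 2 * h1
      have hDim : (D t).im = s * (s - c) / R ^ 2 := by
        rw [hDdef]
        simp only [Complex.div_im]
        rw [hnum_re, hnum_im, hwre, hwim, hnsq, ← hσdef, ← hcdef, div_sub_div_same]
        congr 1
        linear_combination (s ^ 2 : ℝ) * h1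
      -- (g t).re = L, (g t).im = A
      have hgre' : (g t).re = L := by rw [hgdef, hLdef, hRdef]; simp [Complex.log_re]
      have hgim' : (g t).im = A := by rw [hgdef, hAdef]; simp [Complex.log_im]
      rw [hgre', hgim', hDre, hDim]
      -- reduce to L * σ + A * (s - c) ≤ 0
      have hσne : σ ≠ 0 := ne_of_gt hσ
      have hRne : R ≠ 0 := ne_of_gt hR
      have hsψne : Real.sin ψ ≠ 0 := ne_of_gt hsψpos
      have hmain : L * σ + A * (s - c) ≤ 0 := by
        have hsc : σ * Real.cos ψ / Real.sin ψ = c - s := by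
          rw [hcosψ, hsinψ]
          field_simp
        have hAeq : A = t - ψ := by rw [hψdef]; ring
        have hbr : Real.log σ + (ψ - t) * (Real.cos ψ / Real.sin ψ) - Real.log (Real.sin ψ) ≤ 0 := by
          rw [hσdef]; linarith [hkey]
        have heq : L * σ + A * (s - c) =
            σ * (Real.log σ + (ψ - t) * (Real.cos ψ / Real.sin ψ) - Real.log (Real.sin ψ)) := by
          rw [hL, hAeq, show s - c = -(σ * Real.cos ψ / Real.sin ψ) by rw [hsc]; ring]
          ring
        rw [heq]
        have := mul_nonneg hσ.le (neg_nonneg.2 hbr)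
        nlinarith [this]
      have expand2 : s * σ / R ^ 2 * L + L * (s * σ / R ^ 2) +
          (s * (s - c) / R ^ 2 * A + A * (s * (s - c) / R ^ 2)) =
          (2 * s / R ^ 2) * (L * σ + A * (s - c)) := by
        ring
      rw [expand2]
      have hpos : (0:ℝ) ≤ 2 * s / R ^ 2 := by positivity
      have := mul_nonneg hpos (neg_nonneg.2 hmain)
      nlinarith [this]
  -- conclude
  intro a ha b hb hab
  simp only
  rw [Complex.norm_def, Complex.norm_def]
  exact Real.sqrt_le_sqrt (hFanti ha hb hab)
end

section
/- For every t ∈ [0, π] and every s ∈ [0, 1), one has Im( log(1 − s·e^{it}) · (s − e^{−it}) ) ≤ 0, where log denotes the principal branch of the complex logarithm. -/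
open Complex Real

private lemma hasDerivAt_im_aux {f : ℝ → ℂ} {f' : ℂ} {x : ℝ} (hf : HasDerivAt f f' x) :
    HasDerivAt (fun y => (f y).im) f'.im x := by
  have := Complex.imCLM.hasFDerivAt.comp_hasDerivAt x hf
  exact this

/-- For every `t ∈ [0, π]` and `s ∈ [0, 1)`, one has
`Im( log(1 − s·e^{it}) · (s − e^{−it}) ) ≤ 0`, with `log` the principal branch. -/
theorem im_log_mul_nonpos (t : ℝ) (ht : t ∈ Set.Icc 0 π) (s : ℝ)
    (hs : s ∈ Set.Ico (0 : ℝ) 1) :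
    (Complex.log (1 - (s : ℂ) * Complex.exp ((t : ℂ) * Complex.I)) *
        ((s : ℂ) - Complex.exp (-((t : ℂ) * Complex.I)))).im ≤ 0 := by
  obtain ⟨hs0, hs1⟩ := hs
  obtain ⟨ht0, htπ⟩ := ht
  set E : ℂ := Complex.exp ((t : ℂ) * Complex.I) with hE
  have hEre : E.re = Real.cos t := Complex.exp_ofReal_mul_I_re t
  have hEim : E.im = Real.sin t := Complex.exp_ofReal_mul_I_im t
  have hEne : E ≠ 0 := Complex.exp_ne_zero _
  have hsin : 0 ≤ Real.sin t := Real.sin_nonneg_of_nonneg_of_le_pi ht0 htπ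
  have hEinv : Complex.exp (-((t : ℂ) * Complex.I)) = E⁻¹ := by
    rw [hE, ← Complex.exp_neg]
  rw [hEinv]
  set F : ℝ → ℝ := fun u => (Complex.log (1 - (u : ℂ) * E) * ((u : ℂ) - E⁻¹)).im with hF
  have hre : ∀ u : ℝ, u ∈ Set.Icc 0 s → 0 < (1 - (u : ℂ) * E).re := by
    intro u hu
    simp only [Complex.sub_re, Complex.one_re, Complex.mul_re, Complex.ofReal_re,
      Complex.ofReal_im, hEre, hEim, zero_mul, sub_zero]
    nlinarith [Real.cos_le_one t, Real.neg_one_le_cos t, hu.1, hu.2, hs1]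
  have him : ∀ u : ℝ, u ∈ Set.Icc 0 s → (1 - (u : ℂ) * E).im ≤ 0 := by
    intro u hu
    simp only [Complex.sub_im, Complex.one_im, Complex.mul_im, Complex.ofReal_re,
      Complex.ofReal_im, hEre, hEim, zero_mul, add_zero, zero_sub, neg_nonpos]
    exact mul_nonneg hu.1 hsin
  have hderiv : ∀ u : ℝ, u ∈ Set.Icc 0 s →
      HasDerivAt F (Complex.arg (1 - (u : ℂ) * E)) u := by
    intro u hu
    have hz : (1 - (u : ℂ) * E) ∈ Complex.slitPlane := Or.inl (hre u hu)
    have hG : HasDerivAt (fun z : ℂ => Complex.log (1 - z * E) * (z - E⁻¹))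
        ((1 - (u : ℂ) * E)⁻¹ * (-E) * ((u : ℂ) - E⁻¹) + Complex.log (1 - (u : ℂ) * E) * 1)
        (u : ℂ) := by
      have h1 : HasDerivAt (fun z : ℂ => 1 - z * E) (-E) (u : ℂ) := by
        simpa using ((hasDerivAt_id (u : ℂ)).mul_const E).const_sub 1
      have hlog : HasDerivAt (fun z : ℂ => Complex.log (1 - z * E))
          ((1 - (u : ℂ) * E)⁻¹ * (-E)) (u : ℂ) :=
        by have := (Complex.hasDerivAt_log hz).comp (u : ℂ) h1; exact this
      exact hlog.mul (((hasDerivAt_id (u : ℂ)).sub_const E⁻¹))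
    have hGR : HasDerivAt (fun v : ℝ => Complex.log (1 - (v : ℂ) * E) * ((v : ℂ) - E⁻¹))
        ((1 - (u : ℂ) * E)⁻¹ * (-E) * ((u : ℂ) - E⁻¹) + Complex.log (1 - (u : ℂ) * E) * 1) u :=
      hG.comp_ofReal
    have hsimp : (1 - (u : ℂ) * E)⁻¹ * (-E) * ((u : ℂ) - E⁻¹) + Complex.log (1 - (u : ℂ) * E) * 1
        = 1 + Complex.log (1 - (u : ℂ) * E) := by
      have hne : (1 : ℂ) - (u : ℂ) * E ≠ 0 := by
        intro h
        have := hre u hu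
        rw [h] at this
        simp at this
      field_simp
      ring
    rw [hsimp] at hGR
    have h := hasDerivAt_im_aux hGR
    simp only [Complex.add_im, Complex.one_im, Complex.log_im, zero_add] at h
    exact h
  have hmono : AntitoneOn F (Set.Icc 0 s) := by
    apply antitoneOn_of_deriv_nonpos (convex_Icc 0 s)
    · exact fun u hu => (hderiv u hu).continuousAt.continuousWithinAt
    · intro u hu
      rw [interior_Icc] at hu
      exact (hderiv u ⟨hu.1.le, hu.2.le⟩).differentiableAt.differentiableWithinAt
    · intro u hu
      rw [interior_Icc] at hu
      have hu' : u ∈ Set.Icc 0 s := Set.mem_Icc.2 ⟨hu.1.le, hu.2.le⟩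
      rw [(hderiv u hu').deriv]
      have him' := him u hu'
      rcases lt_or_eq_of_le him' with h | h
      · exact (Complex.arg_neg_iff.2 h).le
      · have : Complex.arg (1 - (u : ℂ) * E) = 0 :=
          Complex.arg_eq_zero_iff.2 ⟨(hre u hu').le, h⟩
        simp [this]
  have h0 : F 0 = 0 := by simp [hF]
  have hFs : F s ≤ F 0 :=
    hmono (Set.mem_Icc.2 ⟨le_refl 0, hs0⟩) (Set.mem_Icc.2 ⟨hs0, le_refl s⟩) hs0
  rw [h0] at hFs
  exact hFs
end

section
/- For 0 ≤ r < 1 set θ(r) = √(1−r). Then the Dirichlet-metric distance δ(r·e^{iθ(r)}, r) converges to √(3/4) as r → 1⁻. -/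
open Complex Real Filter Topology

noncomputable def uu (r : ℝ) : ℂ :=
  1 - (r : ℂ) ^ 2 * Complex.exp ((Real.sqrt (1 - r) : ℂ) * Complex.I)

/-- sin y / y → 1. -/
lemma tendsto_sin_div : Tendsto (fun y : ℝ => Real.sin y / y) (𝓝[≠] (0:ℝ)) (𝓝 1) := by
  have h := (hasDerivAt_iff_tendsto_slope).1 (Real.hasDerivAt_sin 0)
  rw [Real.cos_zero] at h
  refine h.congr' ?_
  filter_upwards [self_mem_nhdsWithin] with y hy
  simp [slope_def_field, div_eq_inv_mul]

/-- (1 - cos x)/x² → 1/2. -/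
lemma tendsto_one_sub_cos_div_sq :
    Tendsto (fun x : ℝ => (1 - Real.cos x) / x ^ 2) (𝓝[≠] (0:ℝ)) (𝓝 (1/2)) := by
  have hhalf : Tendsto (fun x : ℝ => x / 2) (𝓝[≠] (0:ℝ)) (𝓝[≠] (0:ℝ)) := by
    apply tendsto_nhdsWithin_of_tendsto_nhds_of_eventually_within
    · have : Tendsto (fun x : ℝ => x / 2) (𝓝 (0:ℝ)) (𝓝 (0/2)) :=
        (tendsto_id.div_const 2)
      simpa using this.mono_left nhdsWithin_le_nhds
    · filter_upwards [self_mem_nhdsWithin] with x hx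
      simp only [Set.mem_compl_iff, Set.mem_singleton_iff] at hx ⊢
      intro h; exact hx (by linarith)
  have h1 : Tendsto (fun x : ℝ => (Real.sin (x/2) / (x/2)) ^ 2 / 2) (𝓝[≠] (0:ℝ))
      (𝓝 (1/2)) := by
    have := ((tendsto_sin_div.comp hhalf).pow 2).div_const 2
    simpa using this
  refine h1.congr' ?_
  filter_upwards [self_mem_nhdsWithin] with x hx
  have hx0 : x ≠ 0 := hx
  have hc : Real.cos x = 1 - 2 * Real.sin (x/2) ^ 2 := by
    have h2 : Real.cos (2 * (x/2)) = 2 * Real.cos (x/2) ^ 2 - 1 := Real.cos_two_mul _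
    have h3 : Real.sin (x/2) ^ 2 + Real.cos (x/2) ^ 2 = 1 := Real.sin_sq_add_cos_sq _
    have : (2:ℝ) * (x/2) = x := by ring
    rw [this] at h2
    linarith
  rw [hc]
  field_simp
  ring

lemma normSq_uu (r : ℝ) :
    Complex.normSq (uu r) = (1 - r^2)^2 + 2 * r^2 * (1 - Real.cos (Real.sqrt (1 - r))) := by
  set θ := Real.sqrt (1 - r)
  have hre : (uu r).re = 1 - r^2 * Real.cos θ := by
    simp [uu, Complex.exp_ofReal_mul_I_re, Complex.exp_ofReal_mul_I_im, ← Complex.ofReal_pow,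
      Complex.ofReal_re, Complex.ofReal_im]
    exact Or.inl rfl
  have him : (uu r).im = -(r^2 * Real.sin θ) := by
    simp [uu, Complex.exp_ofReal_mul_I_re, Complex.exp_ofReal_mul_I_im, ← Complex.ofReal_pow,
      Complex.ofReal_re, Complex.ofReal_im]
    exact Or.inl rfl
  rw [Complex.normSq_apply, hre, him]
  have hpyth : Real.sin θ ^ 2 + Real.cos θ ^ 2 = 1 := Real.sin_sq_add_cos_sq θ
  nlinarith [hpyth]

lemma mem_Ioo_eventually : ∀ᶠ r in 𝓝[<] (1:ℝ), r ∈ Set.Ioo (1/2 : ℝ) 1 := by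
  have : Set.Ioo (1/2 : ℝ) 1 ∈ 𝓝[<] (1:ℝ) :=
    Ioo_mem_nhdsLT_of_mem (by constructor <;> norm_num)
  exact this

lemma tendsto_normSq_div :
    Tendsto (fun r : ℝ => Complex.normSq (uu r) / (1 - r^2)) (𝓝[<] (1:ℝ)) (𝓝 (1/2)) := by
  have hθ : Tendsto (fun r : ℝ => Real.sqrt (1 - r)) (𝓝[<] (1:ℝ)) (𝓝[≠] (0:ℝ)) := by
    apply tendsto_nhdsWithin_of_tendsto_nhds_of_eventually_within
    · have : Tendsto (fun r : ℝ => Real.sqrt (1 - r)) (𝓝 (1:ℝ)) (𝓝 (Real.sqrt (1 - 1))) :=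
        (Real.continuous_sqrt.comp (continuous_const.sub continuous_id)).tendsto 1
      simpa using this.mono_left nhdsWithin_le_nhds
    · filter_upwards [self_mem_nhdsWithin] with r hr
      have hrlt : r < 1 := hr
      have : (0:ℝ) < 1 - r := by linarith
      simpa using ne_of_gt (Real.sqrt_pos.mpr this)
  have h3 : Tendsto (fun r : ℝ =>
      (1 - Real.cos (Real.sqrt (1 - r))) / (Real.sqrt (1 - r)) ^ 2)
      (𝓝[<] (1:ℝ)) (𝓝 (1/2)) := tendsto_one_sub_cos_div_sq.comp hθ
  have h1 : Tendsto (fun r : ℝ => 1 - r^2) (𝓝[<] (1:ℝ)) (𝓝 0) := by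
    have : Tendsto (fun r : ℝ => 1 - r^2) (𝓝 (1:ℝ)) (𝓝 (1 - 1^2)) :=
      (continuous_const.sub (continuous_pow 2)).tendsto 1
    simpa using this.mono_left nhdsWithin_le_nhds
  have h2 : Tendsto (fun r : ℝ => 2 * r^2 / (1 + r)) (𝓝[<] (1:ℝ)) (𝓝 1) := by
    have : Tendsto (fun r : ℝ => 2 * r^2 / (1 + r)) (𝓝 (1:ℝ)) (𝓝 (2 * 1^2 / (1 + 1))) := by
      apply Tendsto.div
      · exact (continuous_const.mul (continuous_pow 2)).tendsto 1
      · exact (continuous_const.add continuous_id).tendsto 1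
      · norm_num
    have h12 : (2:ℝ) * 1^2 / (1 + 1) = 1 := by norm_num
    rw [h12] at this
    exact this.mono_left nhdsWithin_le_nhds
  have hsum := h1.add (h2.mul h3)
  have : (0:ℝ) + 1 * (1/2) = 1/2 := by norm_num
  rw [this] at hsum
  refine hsum.congr' ?_
  filter_upwards [mem_Ioo_eventually] with r hr
  obtain ⟨hr0, hr1⟩ := hr
  have hsq : (Real.sqrt (1 - r)) ^ 2 = 1 - r := Real.sq_sqrt (by linarith)
  have h1r : (1:ℝ) - r ≠ 0 := by intro h; linarith [(show (1:ℝ) - r = 0 from h)]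
  have h1pr : (1:ℝ) + r ≠ 0 := by positivity
  have h1r2 : (1:ℝ) - r^2 ≠ 0 := by nlinarith
  simp only [normSq_uu, hsq]
  field_simp
  ring

lemma uu_ne_zero {r : ℝ} (hr : r ∈ Set.Ioo (1/2 : ℝ) 1) : uu r ≠ 0 := by
  obtain ⟨hr0, hr1⟩ := hr
  intro h
  have h1 : (r : ℂ) ^ 2 * Complex.exp ((Real.sqrt (1 - r) : ℂ) * Complex.I) = 1 := by
    have := sub_eq_zero.mp h
    linear_combination -this
  have h2 : ‖(r : ℂ) ^ 2 * Complex.exp ((Real.sqrt (1 - r) : ℂ) * Complex.I)‖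
      = r ^ 2 := by
    rw [norm_mul, norm_pow, Complex.norm_real, Real.norm_eq_abs, Complex.norm_exp_ofReal_mul_I,
      abs_of_pos (by linarith)]
    ring
  rw [h1] at h2
  simp at h2
  nlinarith

lemma dirDelta_eq_s11 {r : ℝ} (hr : r ∈ Set.Ioo (1/2 : ℝ) 1) :
    dirDelta ((r : ℂ) * Complex.exp ((Real.sqrt (1 - r) : ℂ) * Complex.I)) (r : ℂ) =
    Real.sqrt (1 - ((Real.log ‖uu r‖)^2 + (Complex.arg ((uu r)⁻¹))^2)
      / (Real.log (1 - r^2))^2) := by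
  obtain ⟨hr0, hr1⟩ := hr
  have hr0' : (0:ℝ) < r := by linarith
  have hrne : (r : ℂ) ≠ 0 := by exact_mod_cast ne_of_gt hr0'
  set θ : ℝ := Real.sqrt (1 - r) with hθ
  set E : ℂ := Complex.exp ((θ : ℂ) * Complex.I) with hE
  have hEne : E ≠ 0 := Complex.exp_ne_zero _
  have h1r2 : (0:ℝ) < 1 - r^2 := by nlinarith
  have h1r2' : 1 - r^2 < 1 := by nlinarith
  have hAneg : Real.log (1 - r^2) < 0 := Real.log_neg h1r2 h1r2'
  have hAne : Real.log (1 - r^2) ≠ 0 := ne_of_lt hAneg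
  -- z * conj w
  have hzw : ((r : ℂ) * E) * (starRingEnd ℂ) (r : ℂ) = (r : ℂ)^2 * E := by
    rw [Complex.conj_ofReal]; ring
  have hzwne : (r : ℂ)^2 * E ≠ 0 := mul_ne_zero (pow_ne_zero 2 hrne) hEne
  have h1sub : 1 - (r : ℂ)^2 * E = uu r := rfl
  -- dirK z w
  have hKzw : dirK ((r : ℂ) * E) (r : ℂ)
      = (1 / ((r : ℂ)^2 * E)) * Complex.log ((uu r)⁻¹) := by
    rw [dirK, hzw, if_neg hzwne, h1sub, one_div (uu r)]
  have habsKzw : ‖dirK ((r : ℂ) * E) (r : ℂ)‖^2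
      = (r^2)⁻¹^2 * ((Real.log ‖uu r‖)^2 + (Complex.arg ((uu r)⁻¹))^2) := by
    rw [hKzw, norm_mul, mul_pow]
    congr 1
    · rw [norm_div, norm_one, norm_mul, norm_pow, Complex.norm_real, Real.norm_eq_abs,
        Complex.norm_exp_ofReal_mul_I, abs_of_pos hr0', mul_one, one_div]
    · rw [Complex.sq_norm, Complex.normSq_apply, Complex.log_re, Complex.log_im,
        norm_inv, Real.log_inv]
      ring
  -- dirK z z and dirK w w
  have hzz : ((r : ℂ) * E) * (starRingEnd ℂ) ((r : ℂ) * E) = ((r^2 : ℝ) : ℂ) := by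
    rw [Complex.mul_conj]
    norm_cast
    rw [Complex.normSq_mul, Complex.normSq_ofReal]
    have : Complex.normSq E = 1 := by
      rw [← Complex.sq_norm, hE, Complex.norm_exp_ofReal_mul_I]; norm_num
    rw [this]; ring
  have hww : (r : ℂ) * (starRingEnd ℂ) (r : ℂ) = ((r^2 : ℝ) : ℂ) := by
    rw [Complex.conj_ofReal]; norm_cast; ring
  have hr2ne : ((r^2 : ℝ) : ℂ) ≠ 0 := by
    exact_mod_cast (show (r^2 : ℝ) ≠ 0 by positivity)
  have hcast : 1 / (1 - ((r^2 : ℝ) : ℂ)) = ((((1 - r^2)⁻¹ : ℝ)) : ℂ) := by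
    push_cast; rw [one_div]
  have hlogpos : (0:ℝ) ≤ (1 - r^2)⁻¹ := le_of_lt (inv_pos.mpr h1r2)
  have hKdiag : ∀ x : ℂ, x * (starRingEnd ℂ) x = ((r^2 : ℝ) : ℂ) →
      (dirK x x).re = (r^2)⁻¹ * Real.log ((1 - r^2)⁻¹) := by
    intro x hx
    rw [dirK, hx, if_neg hr2ne, hcast, ← Complex.ofReal_log hlogpos]
    have : (1 : ℂ) / ((r^2 : ℝ) : ℂ) * ((Real.log ((1 - r^2)⁻¹) : ℝ) : ℂ)
        = (((r^2)⁻¹ * Real.log ((1 - r^2)⁻¹) : ℝ) : ℂ) := by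
      push_cast; rw [one_div]
    rw [this, Complex.ofReal_re]
  have hre1 := hKdiag _ hzz
  have hre2 := hKdiag _ hww
  rw [dirDelta, habsKzw, hre1, hre2]
  congr 1
  have hLA : Real.log ((1 - r^2)⁻¹) = -Real.log (1 - r^2) := Real.log_inv _
  rw [hLA]
  have hr2ne' : (r^2 : ℝ) ≠ 0 := by positivity
  field_simp

/-- With `θ(r) = √(1−r)`, the Dirichlet distance `δ(r·e^{iθ(r)}, r)` tends to `√(3/4)`
as `r → 1⁻`. -/
theorem dirichlet_circle_asymptotic :
    Tendsto
      (fun r : ℝ =>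
        dirDelta ((r : ℂ) * Complex.exp ((Real.sqrt (1 - r) : ℂ) * Complex.I)) (r : ℂ))
      (𝓝[<] (1 : ℝ)) (𝓝 (Real.sqrt (3 / 4))) := by
  -- abbreviation facts on the eventual set
  have hev := mem_Ioo_eventually
  have hbasic : ∀ᶠ r in 𝓝[<] (1:ℝ),
      (0:ℝ) < 1 - r^2 ∧ Real.log (1 - r^2) ≠ 0 ∧ uu r ≠ 0 := by
    filter_upwards [hev] with r hr
    obtain ⟨h0, h1⟩ := hr
    have h1r2 : (0:ℝ) < 1 - r^2 := by nlinarith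
    have h1r2' : 1 - r^2 < 1 := by nlinarith
    exact ⟨h1r2, ne_of_lt (Real.log_neg h1r2 h1r2'), uu_ne_zero ⟨h0, h1⟩⟩
  -- A := log(1 - r²) → -∞
  have hA : Tendsto (fun r : ℝ => Real.log (1 - r^2)) (𝓝[<] (1:ℝ)) atBot := by
    apply Real.tendsto_log_nhdsNE_zero.comp
    apply tendsto_nhdsWithin_of_tendsto_nhds_of_eventually_within
    · have : Tendsto (fun r : ℝ => 1 - r^2) (𝓝 (1:ℝ)) (𝓝 (1 - 1^2)) :=
        (continuous_const.sub (continuous_pow 2)).tendsto 1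
      simpa using this.mono_left nhdsWithin_le_nhds
    · filter_upwards [hbasic] with r hr
      exact ne_of_gt hr.1
  have hAneg : Tendsto (fun r : ℝ => -(Real.log (1 - r^2))) (𝓝[<] (1:ℝ)) atTop :=
    tendsto_neg_atTop_iff.mpr hA
  have hA2 : Tendsto (fun r : ℝ => (Real.log (1 - r^2))^2) (𝓝[<] (1:ℝ)) atTop := by
    have := hAneg.atTop_mul_atTop₀ hAneg
    refine this.congr ?_
    intro r; ring
  have hAinv : Tendsto (fun r : ℝ => (Real.log (1 - r^2))⁻¹) (𝓝[<] (1:ℝ)) (𝓝 0) := by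
    have := hA2.inv_tendsto_atTop
    -- (A²)⁻¹ → 0; but we need A⁻¹ → 0. Use |A⁻¹| small: easier: A⁻¹ = -( (-A)⁻¹ )
    have h2 := hAneg.inv_tendsto_atTop
    have h3 := h2.neg
    rw [neg_zero] at h3
    refine h3.congr ?_
    intro r
    simp only [Pi.inv_apply, inv_neg, neg_neg]
  -- B/A → 1/2
  have hQ : Tendsto (fun r : ℝ => Real.log (Complex.normSq (uu r) / (1 - r^2)))
      (𝓝[<] (1:ℝ)) (𝓝 (Real.log (1/2))) :=
    ((Real.continuousAt_log (by norm_num)).tendsto).comp tendsto_normSq_div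
  have hB : Tendsto (fun r : ℝ =>
      Real.log ‖uu r‖ / Real.log (1 - r^2)) (𝓝[<] (1:ℝ)) (𝓝 (1/2)) := by
    have haux : Tendsto (fun r : ℝ =>
        (Real.log (Complex.normSq (uu r) / (1 - r^2)) * (Real.log (1 - r^2))⁻¹ + 1) / 2)
        (𝓝[<] (1:ℝ)) (𝓝 ((Real.log (1/2) * 0 + 1) / 2)) :=
      ((hQ.mul hAinv).add tendsto_const_nhds).div_const 2
    rw [show (Real.log (1/2) * 0 + 1) / 2 = (1:ℝ)/2 by ring] at haux
    refine haux.congr' ?_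
    filter_upwards [hbasic] with r hr
    obtain ⟨h1r2, hAne, hune⟩ := hr
    have hnsne : Complex.normSq (uu r) ≠ 0 := by simpa [Complex.normSq_eq_zero] using hune
    have hS : Real.log (Complex.normSq (uu r)) = 2 * Real.log ‖uu r‖ := by
      rw [← Complex.sq_norm, Real.log_pow]
      push_cast; ring
    rw [Real.log_div hnsne (ne_of_gt h1r2), hS]
    field_simp
    ring
  have hBsq : Tendsto (fun r : ℝ =>
      (Real.log ‖uu r‖)^2 / (Real.log (1 - r^2))^2)
      (𝓝[<] (1:ℝ)) (𝓝 (1/4)) := by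
    have := hB.pow 2
    rw [show ((1:ℝ)/2)^2 = 1/4 by norm_num] at this
    refine this.congr ?_
    intro r
    rw [div_pow]
  -- arg part → 0
  have hC : Tendsto (fun r : ℝ =>
      (Complex.arg ((uu r)⁻¹))^2 / (Real.log (1 - r^2))^2) (𝓝[<] (1:ℝ)) (𝓝 0) := by
    have hbound : Tendsto (fun r : ℝ => Real.pi^2 * ((Real.log (1 - r^2))^2)⁻¹)
        (𝓝[<] (1:ℝ)) (𝓝 (Real.pi^2 * 0)) :=
      tendsto_const_nhds.mul hA2.inv_tendsto_atTop
    rw [mul_zero] at hbound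
    apply squeeze_zero' ?_ ?_ hbound
    · filter_upwards with r
      positivity
    · filter_upwards [hbasic] with r hr
      have hA2pos : (0:ℝ) < (Real.log (1 - r^2))^2 := by
        have := hr.2.1
        positivity
      have harg : (Complex.arg ((uu r)⁻¹))^2 ≤ Real.pi^2 := by
        have h := Complex.abs_arg_le_pi ((uu r)⁻¹)
        obtain ⟨h1, h2⟩ := abs_le.mp h
        nlinarith
      calc (Complex.arg ((uu r)⁻¹))^2 / (Real.log (1 - r^2))^2
          ≤ Real.pi^2 / (Real.log (1 - r^2))^2 := by gcongr
        _ = Real.pi^2 * ((Real.log (1 - r^2))^2)⁻¹ := by rw [div_eq_mul_inv]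
  -- combine
  have hratio : Tendsto (fun r : ℝ =>
      ((Real.log ‖uu r‖)^2 + (Complex.arg ((uu r)⁻¹))^2)
        / (Real.log (1 - r^2))^2) (𝓝[<] (1:ℝ)) (𝓝 (1/4)) := by
    have := hBsq.add hC
    rw [add_zero] at this
    refine this.congr ?_
    intro r
    rw [add_div]
  have hfinal : Tendsto (fun r : ℝ =>
      1 - ((Real.log ‖uu r‖)^2 + (Complex.arg ((uu r)⁻¹))^2)
        / (Real.log (1 - r^2))^2) (𝓝[<] (1:ℝ)) (𝓝 (3/4)) := by
    have h := (tendsto_const_nhds (x := (1:ℝ))).sub hratio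
    rw [show (1:ℝ) - 1/4 = 3/4 by norm_num] at h
    exact h
  have hsqrt := (Real.continuous_sqrt.tendsto (3/4)).comp hfinal
  refine hsqrt.congr' ?_
  filter_upwards [hev] with r hr
  exact (dirDelta_eq_s11 hr).symm
end

section
/- Let C_r = {z ∈ ℂ : |z| = r} and let δ be the Dirichlet metric on 𝔻. For every ε with 0 < ε < √(3/4) there exists r₀ ∈ (0,1) such that for all r with r₀ < r < 1 there is a finite set D ⊆ C_r whose cardinality is at least 1/√(1−r) and such that δ(x,y) ≥ ε for all distinct x, y ∈ D. -/
open Complex Real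

lemma dirK_diag (r : ℝ) (hr0 : 0 < r) (hr1 : r < 1) (z : ℂ) (hz : ‖z‖ = r) :
    (dirK z z).re = Real.log (1 / (1 - r^2)) / r^2 := by
  have hzz : z * (starRingEnd ℂ) z = ((r^2 : ℝ) : ℂ) := by
    rw [Complex.mul_conj]
    norm_cast
    rw [Complex.normSq_eq_norm_sq, hz]
  have hne : z * (starRingEnd ℂ) z ≠ 0 := by
    rw [hzz]; norm_cast; positivity
  have h1 : (0:ℝ) < 1 - r^2 := by nlinarith
  rw [dirK, if_neg hne, hzz]
  have : (1 : ℂ) - ((r^2:ℝ):ℂ) = ((1 - r^2 : ℝ) : ℂ) := by push_cast; ring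
  rw [this]
  have : (1:ℂ) / ((1 - r^2 : ℝ) : ℂ) = (((1/(1 - r^2) : ℝ)) : ℂ) := by push_cast; ring
  rw [this, ← Complex.ofReal_log (by positivity)]
  have : (1:ℂ) / ((r^2:ℝ):ℂ) = (((1/r^2 : ℝ)):ℂ) := by push_cast; ring
  rw [this, ← Complex.ofReal_mul, Complex.ofReal_re]
  ring

set_option maxHeartbeats 1000000 in
lemma key_estimate (ε r : ℝ) (x y : ℂ) (hε : 0 < ε) (hε1 : ε^2 < 3/4)
    (hr0 : (0.9:ℝ) ≤ r) (hr1 : r < 1)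
    (hx : ‖x‖ = r) (hy : ‖y‖ = r)
    (hsep : 1 - r ≤ ‖1 - x * (starRingEnd ℂ) y‖ ^ 2)
    (hL2 : 2 ≤ -Real.log (1-r))
    (hquad : ((-Real.log (1-r))/2)^2 + π^2
        ≤ (1-ε^2) * ((-Real.log (1-r)) - Real.log 2)^2) :
    ε ≤ dirDelta x y := by
  set L : ℝ := -Real.log (1-r) with hL
  have h1r : (0:ℝ) < 1 - r := by linarith
  have hrpos : (0:ℝ) < r := by linarith
  set a : ℂ := x * (starRingEnd ℂ) y with ha
  have habsa : ‖a‖ = r^2 := by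
    rw [ha, norm_mul, Complex.norm_conj, hx, hy]; ring
  have ha0 : a ≠ 0 := by
    intro h; rw [h] at habsa; simp at habsa; nlinarith
  have hsep0 : (0:ℝ) < ‖1 - a‖ := by
    by_contra h
    push_neg at h
    have : ‖1 - a‖ = 0 := le_antisymm h (by positivity)
    rw [this] at hsep; norm_num at hsep; linarith
  have h1a : (1:ℂ) - a ≠ 0 := by
    intro h; rw [h] at hsep0; simp at hsep0
  set w : ℂ := 1 / (1 - a) with hw
  have hw0 : w ≠ 0 := by simp [hw, h1a]
  -- |log w|^2
  have habsw : ‖w‖ = (‖1-a‖)⁻¹ := by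
    simp [hw, norm_div]
  set m : ℝ := Real.log (‖1-a‖) with hm
  have hlogw : Real.log (‖w‖) = -m := by
    rw [habsw, Real.log_inv]
  have habslog : (‖Complex.log w‖)^2 = m^2 + (Complex.arg w)^2 := by
    rw [Complex.sq_norm, Complex.normSq_apply, Complex.log_re, Complex.log_im, hlogw]
    ring
  -- bounds on m
  have hub : ‖1 - a‖ ≤ 2 := by
    have h := norm_add_le (1:ℂ) (-a)
    simp only [← sub_eq_add_neg, norm_neg, norm_one] at h
    rw [habsa] at h; nlinarith
  have hmub : m ≤ L/2 := by
    have h1 : m ≤ Real.log 2 := by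
      rw [hm]; exact Real.log_le_log hsep0 hub
    have h2 : Real.log 2 ≤ 1 := by
      have := Real.log_le_sub_one_of_pos (by norm_num : (0:ℝ) < 2)
      linarith
    linarith
  have hmlb : -(L/2) ≤ m := by
    have h1 : Real.log (1-r) ≤ Real.log (‖1-a‖^2) :=
      Real.log_le_log h1r hsep
    rw [Real.log_pow] at h1
    push_cast at h1
    rw [← hm] at h1
    rw [hL]; linarith
  have hmsq : m^2 ≤ (L/2)^2 := sq_le_sq' hmlb hmub
  have hargsq : (Complex.arg w)^2 ≤ π^2 :=
    sq_le_sq' (by linarith [Complex.neg_pi_lt_arg w]) (Complex.arg_le_pi w)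
  -- M
  set M : ℝ := Real.log (1/(1-r^2)) with hM
  have h1r2 : (0:ℝ) < 1 - r^2 := by nlinarith
  have hMeq : M = L - Real.log (1+r) := by
    rw [hM, one_div, Real.log_inv, hL]
    have : 1 - r^2 = (1-r)*(1+r) := by ring
    rw [this, Real.log_mul (by linarith) (by linarith)]
    ring
  have hlog1r : Real.log (1+r) ≤ Real.log 2 := Real.log_le_log (by linarith) (by linarith)
  have hlog2pos : (0:ℝ) < Real.log 2 := Real.log_pos (by norm_num)
  have hMlb : L - Real.log 2 ≤ M := by rw [hMeq]; linarith
  have hLlog2 : (0:ℝ) < L - Real.log 2 := by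
    have h2 : Real.log 2 ≤ 1 := by
      have := Real.log_le_sub_one_of_pos (by norm_num : (0:ℝ) < 2)
      linarith
    linarith
  have hMpos : (0:ℝ) < M := by linarith
  have hMsq : (L - Real.log 2)^2 ≤ M^2 := pow_le_pow_left₀ hLlog2.le hMlb 2
  -- the kernel value
  have hKxy : dirK x y = (1/a) * Complex.log w := by
    rw [dirK, ← ha, if_neg ha0, ← hw]
  have habsK : (‖dirK x y‖)^2 = (m^2 + (Complex.arg w)^2) / (r^2)^2 := by
    rw [hKxy, norm_mul, mul_pow, norm_div, norm_one, habsa, habslog]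
    ring
  -- diagonal
  have hKxx : (dirK x x).re = M / r^2 := dirK_diag r hrpos hr1 x hx
  have hKyy : (dirK y y).re = M / r^2 := dirK_diag r hrpos hr1 y hy
  -- ratio bound
  have hεsq : ε^2 ≤ 1 - (m^2 + (Complex.arg w)^2) / (r^2)^2 / ((M/r^2) * (M/r^2)) := by
    have hr2 : (r:ℝ)^2 ≠ 0 := by positivity
    have hM2 : (0:ℝ) < M^2 := by positivity
    have heq : (m^2 + (Complex.arg w)^2) / (r^2)^2 / ((M/r^2) * (M/r^2))
        = (m^2 + (Complex.arg w)^2) / M^2 := by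
      rw [div_div]
      congr 1
      field_simp
    rw [heq]
    have hnum : m^2 + (Complex.arg w)^2 ≤ (1-ε^2) * M^2 := by
      have h1 : m^2 + (Complex.arg w)^2 ≤ (L/2)^2 + π^2 := by linarith
      have h2 : (1-ε^2) * (L - Real.log 2)^2 ≤ (1-ε^2) * M^2 :=
        mul_le_mul_of_nonneg_left hMsq (by linarith)
      exact le_trans (le_trans h1 hquad) h2
    have : (m^2 + (Complex.arg w)^2) / M^2 ≤ 1 - ε^2 := by
      rw [div_le_iff₀ hM2]; linarith
    linarith
  rw [dirDelta, hKxx, hKyy, habsK]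
  exact Real.le_sqrt_of_sq_le hεsq

lemma abs_one_sub_exp (s θ : ℝ) :
    ‖1 - (s:ℂ) * Complex.exp ((θ:ℂ) * I)‖^2 = 1 - 2*s*Real.cos θ + s^2 := by
  rw [Complex.sq_norm, Complex.normSq_apply]
  simp only [Complex.sub_re, Complex.sub_im, Complex.one_re, Complex.one_im,
    Complex.mul_re, Complex.mul_im, Complex.ofReal_re, Complex.ofReal_im,
    Complex.exp_ofReal_mul_I_re, Complex.exp_ofReal_mul_I_im]
  have h := Real.sin_sq_add_cos_sq θ
  nlinarith [h]

lemma cos_bound (N m : ℕ) (hN : 2 ≤ N) (hm1 : 1 ≤ m) (hm2 : m < N) :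
    Real.cos (2*π*m/N) ≤ Real.cos (2*π/N) := by
  have hNpos : (0:ℝ) < N := by positivity
  have hπ := Real.pi_pos
  rcases le_or_gt (2*m) N with h | h
  · apply Real.cos_le_cos_of_nonneg_of_le_pi
    · positivity
    · rw [div_le_iff₀ hNpos]
      have : (2*m : ℝ) ≤ N := by exact_mod_cast h
      nlinarith
    · have h1 : (1:ℝ) ≤ (m:ℝ) := by exact_mod_cast hm1
      rw [div_le_div_iff₀ hNpos hNpos]
      have h2 := mul_le_mul_of_nonneg_right h1 (by positivity : (0:ℝ) ≤ 2*π*N)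
      nlinarith
  · have hmN : (m:ℝ) ≤ N := by exact_mod_cast hm2.le
    have key : 2*π*m/N = 2*π - 2*π*((N:ℝ)-m)/N := by
      field_simp
      ring
    rw [key, Real.cos_two_pi_sub]
    apply Real.cos_le_cos_of_nonneg_of_le_pi
    · positivity
    · rw [div_le_iff₀ hNpos]
      have : (N:ℝ) < 2*m := by exact_mod_cast h
      nlinarith
    · have h1 : (1:ℝ) ≤ (N:ℝ) - m := by
        have : (m:ℝ) + 1 ≤ N := by exact_mod_cast hm2
        linarith
      rw [div_le_div_iff₀ hNpos hNpos]
      have h2 := mul_le_mul_of_nonneg_right h1 (by positivity : (0:ℝ) ≤ 2*π*N)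
      nlinarith

lemma one_sub_cos_ge (N : ℕ) (hN : 4 ≤ N) : 8/(N:ℝ)^2 ≤ 1 - Real.cos (2*π/N) := by
  have hNpos : (0:ℝ) < N := by positivity
  have hN4 : (4:ℝ) ≤ N := by exact_mod_cast hN
  have hπ := Real.pi_pos
  have hπ4 : π < 4 := by linarith [Real.pi_lt_d2]
  have hx : (0:ℝ) < π/N := by positivity
  have hx1 : π/N ≤ 1 := by rw [div_le_one hNpos]; linarith
  have hs := Real.sin_gt_sub_cube hx
  have hs2 : 3/4*(π/N) ≤ Real.sin (π/N) := by nlinarith [sq_nonneg (π/N)]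
  have heq : 2*π/N = 2*(π/N) := by ring
  rw [heq, Real.cos_two_mul]
  have hc : Real.cos (π/N)^2 = 1 - Real.sin (π/N)^2 := Real.cos_sq' _
  rw [hc]
  have hπ3 : 3 < π := Real.pi_gt_three
  have h1 : (3/4*(π/N))^2 ≤ Real.sin (π/N)^2 := by
    apply sq_le_sq' _ hs2
    nlinarith
  have h2 : 8/(N:ℝ)^2 ≤ 2*(3/4*(π/N))^2 := by
    have he : 2*(3/4*(π/N))^2 = (9/8*π^2)/(N:ℝ)^2 := by
      field_simp; ring
    rw [he, div_le_div_iff₀ (by positivity) (by positivity)]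
    nlinarith [mul_le_mul_of_nonneg_right (show (8:ℝ) ≤ 9/8*π^2 by nlinarith) (sq_nonneg (N:ℝ))]
  nlinarith

lemma conj_mul_pts (r θ φ : ℝ) :
    ((r:ℂ) * Complex.exp ((θ:ℂ)*I)) * (starRingEnd ℂ) ((r:ℂ) * Complex.exp ((φ:ℂ)*I))
      = ((r^2:ℝ):ℂ) * Complex.exp (((θ-φ:ℝ):ℂ)*I) := by
  have h1 : (starRingEnd ℂ) ((r:ℂ) * Complex.exp ((φ:ℂ)*I))
      = (r:ℂ) * Complex.exp (((-φ:ℝ):ℂ)*I) := by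
    rw [map_mul, Complex.conj_ofReal, ← Complex.exp_conj]
    congr 1
    simp [map_mul, Complex.conj_ofReal, Complex.conj_I]
  rw [h1, mul_mul_mul_comm, ← Complex.exp_add]
  congr 1
  · push_cast; ring
  · push_cast; ring

lemma sep_bound (r : ℝ) (hr0 : (0.9:ℝ) ≤ r) (hr1 : r < 1) (N : ℕ) (hN4 : 4 ≤ N)
    (hNr : (N:ℝ)^2 ≤ 4/(1-r)) (j k : ℕ) (hj : j < N) (hk : k < N) (hjk : j ≠ k) :
    1 - r ≤ ‖1 - ((r:ℂ) * Complex.exp (((2*π*j/N:ℝ):ℂ)*I))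
        * (starRingEnd ℂ) ((r:ℂ) * Complex.exp (((2*π*k/N:ℝ):ℂ)*I))‖^2 := by
  have hNpos : (0:ℝ) < N := by positivity
  rw [conj_mul_pts, abs_one_sub_exp]
  -- reduce cos to cos (2πm/N)
  obtain ⟨m, hm1, hmN, hcoseq⟩ :
      ∃ m : ℕ, 1 ≤ m ∧ m < N ∧
        Real.cos (2*π*j/N - 2*π*k/N) = Real.cos (2*π*m/N) := by
    rcases lt_or_gt_of_ne hjk with h | h
    · refine ⟨k - j, by omega, by omega, ?_⟩
      rw [← Real.cos_neg]
      congr 1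
      have : ((k - j : ℕ) : ℝ) = (k:ℝ) - j := by
        push_cast [Nat.cast_sub h.le]; ring
      rw [this]; ring
    · refine ⟨j - k, by omega, by omega, ?_⟩
      congr 1
      have : ((j - k : ℕ) : ℝ) = (j:ℝ) - k := by
        push_cast [Nat.cast_sub h.le]; ring
      rw [this]; ring
  rw [hcoseq]
  have hc1 := cos_bound N (j - k + (k - j)) (by omega) (by omega) (by omega)
  have hc2 : Real.cos (2*π*m/N) ≤ Real.cos (2*π/N) :=
    cos_bound N m (by omega) hm1 hmN
  have hc3 := one_sub_cos_ge N hN4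
  have hc : Real.cos (2*π*m/N) ≤ 1 - 8/(N:ℝ)^2 := by linarith
  have h1r : (0:ℝ) < 1 - r := by linarith
  have hN2 : 1 - r ≤ 4/(N:ℝ)^2 := by
    rw [le_div_iff₀ h1r] at hNr
    rw [le_div_iff₀ (by positivity : (0:ℝ) < (N:ℝ)^2)]
    nlinarith
  have hr2 : (1/4:ℝ) ≤ r^2 := by nlinarith
  have hNinv : (0:ℝ) ≤ 1/(N:ℝ)^2 := by positivity
  have ht1 : 2*r^2 * Real.cos (2*π*m/N) ≤ 2*r^2 * (1 - 8/(N:ℝ)^2) :=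
    mul_le_mul_of_nonneg_left hc (by nlinarith)
  have ht2 : (1/4:ℝ) * (1/(N:ℝ)^2) ≤ r^2 * (1/(N:ℝ)^2) :=
    mul_le_mul_of_nonneg_right hr2 hNinv
  have he1 : 2*r^2 * (1 - 8/(N:ℝ)^2) = 2*r^2 - 16 * (r^2 * (1/(N:ℝ)^2)) := by ring
  have he2 : (8:ℝ)/(N:ℝ)^2 = 8 * (1/(N:ℝ)^2) := by ring
  have he3 : (4:ℝ)/(N:ℝ)^2 = 4 * (1/(N:ℝ)^2) := by ring
  rw [he3] at hN2
  rw [he1] at ht1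
  nlinarith [sq_nonneg (1 - r^2)]

lemma pts_inj (r : ℝ) (hr : r ≠ 0) (N : ℕ) (hN : 0 < N) (j k : ℕ) (hj : j < N) (hk : k < N)
    (h : (r:ℂ) * Complex.exp (((2*π*j/N:ℝ):ℂ)*I) = (r:ℂ) * Complex.exp (((2*π*k/N:ℝ):ℂ)*I)) :
    j = k := by
  have hr' : (r:ℂ) ≠ 0 := Complex.ofReal_ne_zero.mpr hr
  have h2 := mul_left_cancel₀ hr' h
  rw [Complex.exp_eq_exp_iff_exists_int] at h2
  obtain ⟨n, hn⟩ := h2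
  have him := congrArg Complex.im hn
  simp [Complex.mul_im, Complex.mul_re] at him
  have hNpos : (0:ℝ) < N := by positivity
  have hπ := Real.pi_pos
  have key : (j:ℝ) = k + n * N := by
    have him2 : 2*π*(j:ℝ) = 2*π*k + n*(2*π)*N := by
      field_simp at him
      linear_combination (2*π) * him
    exact mul_left_cancel₀ (by positivity : (0:ℝ) < 2*π).ne' (by linear_combination him2)
  have keyZ : (j:ℤ) = k + n * N := by exact_mod_cast key
  have hjZ : (j:ℤ) < N := by exact_mod_cast hj
  have hkZ : (k:ℤ) < N := by exact_mod_cast hk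
  have hNZ : (0:ℤ) < N := by exact_mod_cast hN
  have hn0 : n = 0 := by
    rcases lt_trichotomy n 0 with hc | hc | hc
    · have h1 : n ≤ -1 := by omega
      have h2 : n * N ≤ (-1) * N := mul_le_mul_of_nonneg_right h1 hNZ.le
      have : (0:ℤ) ≤ j := Int.natCast_nonneg j
      omega
    · exact hc
    · have h1 : (1:ℤ) ≤ n := hc
      have h2 : (1:ℤ) * N ≤ n * N := mul_le_mul_of_nonneg_right h1 hNZ.le
      have : (0:ℤ) ≤ k := Int.natCast_nonneg k
      omega
  rw [hn0] at keyZ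
  simp at keyZ
  exact_mod_cast keyZ

lemma quad_aux (c L : ℝ) (hcpos : 0 < c) (hc34 : c ≤ 3/4) (hLa : 2 ≤ L)
    (hprod : (2+π^2)*L ≤ c*L*L) : (L/2)^2 + π^2 ≤ (1/4+c)*(L-1)^2 := by
  have hB : 0 ≤ (3/2 - 2*c)*L := mul_nonneg (by linarith) (by linarith)
  have hC : 0 ≤ π^2*(L-1) := mul_nonneg (sq_nonneg π) (by linarith)
  nlinarith [hprod, hB, hC]

set_option maxHeartbeats 1000000 in
/-- For every `0 < ε < √(3/4)` there is `r₀ ∈ (0,1)` such that for all `r₀ < r < 1`,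
the circle `C_r = {z : |z| = r}` contains an `ε`-separated set (for the Dirichlet
metric) with at least `1/√(1−r)` points. -/
theorem separated_points_on_circle (ε : ℝ) (hε0 : 0 < ε) (hε1 : ε < Real.sqrt (3 / 4)) :
    ∃ r₀ ∈ Set.Ioo (0 : ℝ) 1, ∀ r : ℝ, r₀ < r → r < 1 →
      ∃ D : Finset ℂ, (∀ z ∈ D, ‖z‖ = r) ∧
        (1 / Real.sqrt (1 - r) ≤ (D.card : ℝ)) ∧
        (∀ x ∈ D, ∀ y ∈ D, x ≠ y → ε ≤ dirDelta x y) := by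
  have hε2 : ε^2 < 3/4 := by
    have := (Real.lt_sqrt hε0.le).mp hε1
    linarith
  set c : ℝ := 3/4 - ε^2 with hc
  have hcpos : 0 < c := by simp [hc]; linarith
  have hπ := Real.pi_pos
  set L₀ : ℝ := max 2 ((2 + π^2)/c) with hL₀
  have hL₀2 : 2 ≤ L₀ := le_max_left _ _
  set r₀ : ℝ := max 0.96 (1 - Real.exp (-L₀)) with hr₀
  refine ⟨r₀, ⟨by positivity, ?_⟩, ?_⟩
  · apply max_lt (by norm_num)
    have := Real.exp_pos (-L₀)
    linarith
  intro r hr hr1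
  have hr96 : (0.96:ℝ) < r := lt_of_le_of_lt (le_max_left _ _) hr
  have hr09 : (0.9:ℝ) ≤ r := by linarith
  have h1r : (0:ℝ) < 1 - r := by linarith
  -- the log bound
  set L : ℝ := -Real.log (1 - r) with hLdef
  have hL2 : 2 ≤ L ∧ (2 + π^2)/c ≤ L := by
    have hexp : 1 - r < Real.exp (-L₀) := by
      have := lt_of_le_of_lt (le_max_right 0.96 (1 - Real.exp (-L₀))) hr
      linarith
    have := Real.log_lt_log h1r hexp
    rw [Real.log_exp] at this
    constructor
    · rw [hLdef]; linarith [hL₀2]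
    · rw [hLdef]; linarith [le_max_right 2 ((2 + π^2)/c)]
  have hquad : (L/2)^2 + π^2 ≤ (1-ε^2) * (L - Real.log 2)^2 := by
    obtain ⟨hLa, hLb⟩ := hL2
    have hcL : 2 + π^2 ≤ c * L := by
      rw [div_le_iff₀ hcpos] at hLb
      linarith [hLb]
    have hlog2a : Real.log 2 ≤ 1 := by
      have := Real.log_le_sub_one_of_pos (by norm_num : (0:ℝ) < 2)
      linarith
    have hlog2b : 0 < Real.log 2 := Real.log_pos (by norm_num)
    have hsq : (L - 1)^2 ≤ (L - Real.log 2)^2 := by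
      apply pow_le_pow_left₀ (by linarith) (by linarith)
    have hprod : (2 + π^2) * L ≤ c * L * L :=
      mul_le_mul_of_nonneg_right hcL (by linarith)
    have step : (L/2)^2 + π^2 ≤ (1-ε^2) * (L - 1)^2 := by
      have hβ : (1-ε^2) = 1/4 + c := by rw [hc]; ring
      rw [hβ]
      exact quad_aux c L hcpos (by rw [hc]; nlinarith [sq_nonneg ε]) hLa hprod
    calc (L/2)^2 + π^2 ≤ (1-ε^2) * (L - 1)^2 := step
      _ ≤ (1-ε^2) * (L - Real.log 2)^2 :=
          mul_le_mul_of_nonneg_left hsq (by linarith)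
  -- size of the set
  set s : ℝ := Real.sqrt (1 - r) with hs
  have hspos : 0 < s := Real.sqrt_pos.mpr h1r
  have hssq : s^2 = 1 - r := Real.sq_sqrt h1r.le
  have hsmall : s < 1/4 := by nlinarith [hssq, hspos]
  have hinv4 : (4:ℝ) < 1/s := by
    rw [lt_div_iff₀ hspos]; nlinarith
  set N : ℕ := ⌈1/s⌉₊ with hN
  have hceil : (1:ℝ)/s ≤ N := Nat.le_ceil _
  have hN4 : 4 ≤ N := by
    have h4 : (4:ℝ) < (N:ℝ) := lt_of_lt_of_le hinv4 hceil
    exact_mod_cast h4.le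
  have hN0 : 0 < N := by omega
  have hNub : (N:ℝ) < 2/s := by
    have h1 : (N:ℝ) < 1/s + 1 := Nat.ceil_lt_add_one (by positivity)
    have h2 : (1:ℝ) < 1/s := by linarith
    have h3 : 2/s = 2*(1/s) := by ring
    rw [h3]; linarith
  have hNr : (N:ℝ)^2 ≤ 4/(1-r) := by
    have h1 : (N:ℝ)^2 ≤ (2/s)^2 := by
      nlinarith [hNub.le, Nat.cast_nonneg (α := ℝ) N]
    have h2 : (2/s)^2 = 4/(1-r) := by
      rw [div_pow, hssq]; norm_num
    linarith
  -- the set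
  set f : ℕ → ℂ := fun k => (r:ℂ) * Complex.exp (((2*π*k/N:ℝ):ℂ)*I) with hf
  have hrne : r ≠ 0 := by linarith
  have hinj : Set.InjOn f (Finset.range N) := by
    intro j hj k hk hjk
    simp only [Finset.coe_range, Set.mem_Iio] at hj hk
    exact pts_inj r hrne N hN0 j k hj hk hjk
  refine ⟨(Finset.range N).image f, ?_, ?_, ?_⟩
  · intro z hz
    simp only [Finset.mem_image] at hz
    obtain ⟨k, _, rfl⟩ := hz
    rw [hf]
    simp only [norm_mul, Complex.norm_real, Real.norm_eq_abs, Complex.norm_exp_ofReal_mul_I, mul_one]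
    exact abs_of_pos (by linarith)
  · rw [Finset.card_image_of_injOn hinj, Finset.card_range]
    exact hceil
  · intro x hx y hy hxy
    simp only [Finset.mem_image] at hx hy
    obtain ⟨j, hj, rfl⟩ := hx
    obtain ⟨k, hk, rfl⟩ := hy
    simp only [Finset.mem_range] at hj hk
    have hjk : j ≠ k := fun h => hxy (by rw [h])
    have hsep := sep_bound r hr09 hr1 N hN4 hNr j k hj hk hjk
    have habsj : ‖f j‖ = r := by
      rw [hf]
      simp only [norm_mul, Complex.norm_real, Real.norm_eq_abs, Complex.norm_exp_ofReal_mul_I, mul_one]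
      exact abs_of_pos (by linarith)
    have habsk : ‖f k‖ = r := by
      rw [hf]
      simp only [norm_mul, Complex.norm_real, Real.norm_eq_abs, Complex.norm_exp_ofReal_mul_I, mul_one]
      exact abs_of_pos (by linarith)
    exact key_estimate ε r (f j) (f k) hε0 hε2 hr09 hr1 habsj habsk hsep hL2.1 hquad
end

section
/- Define h : 𝔻 → ℂ by h(z) = 1 + z/log(1−z) for z ≠ 0 and h(0) = 0, using the principal branch of the logarithm. Then h is analytic on 𝔻, and for every n ≥ 1 its n-th Taylor coefficient at 0 equals c_n = ∫₀¹ t·Γ(n−t)/(Γ(n+1)·Γ(1−t)) dt; in particular every Taylor coefficient of h is nonnegative. -/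
open Complex

/-- The Gregory-type coefficients `c_n = ∫₀¹ t·Γ(n−t)/(Γ(n+1)·Γ(1−t)) dt`. -/
noncomputable def cGreg (n : ℕ) : ℝ :=
  ∫ t in (0 : ℝ)..1, t * Real.Gamma ((n : ℝ) - t) /
    (Real.Gamma ((n : ℝ) + 1) * Real.Gamma (1 - t))

/-- The function `h(z) = 1 + z/log(1−z)` for `z ≠ 0`, with `h(0) = 0`. -/
noncomputable def hFun (z : ℂ) : ℂ :=
  if z = 0 then 0 else 1 + z / Complex.log (1 - z)

open Finset
open scoped ENNReal NNReal

lemma slit (z : ℂ) (hz : ‖z‖ < 1) : (1 - z) ∈ Complex.slitPlane := by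
  rw [Complex.mem_slitPlane_iff]
  left
  have : |z.re| < 1 := lt_of_le_of_lt (Complex.abs_re_le_norm z) hz
  simp only [Complex.sub_re, Complex.one_re]
  linarith [abs_lt.mp this]

lemma hasDerivAt_omp (c : ℂ) {z : ℂ} (hz : ‖z‖ < 1) :
    HasDerivAt (fun w => (1 - w) ^ c) (c * (1 - z) ^ (c - 1) * (-1)) z := by
  have h1 : HasDerivAt (fun w : ℂ => 1 - w) (-1) z := by
    simpa using ((hasDerivAt_id z).const_sub 1)
  exact h1.cpow_const (slit z hz)

lemma iteratedDeriv_omp (t : ℝ) (n : ℕ) {z : ℂ} (hz : ‖z‖ < 1) :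
    iteratedDeriv n (fun w => (1 - w) ^ (t : ℂ)) z
      = (∏ k ∈ Finset.range n, ((k : ℂ) - t)) * (1 - z) ^ ((t : ℂ) - n) := by
  induction n generalizing z with
  | zero => simp
  | succ n ih =>
    rw [iteratedDeriv_succ]
    have hev : iteratedDeriv n (fun w => (1 - w) ^ (t : ℂ))
        =ᶠ[nhds z] fun w => (∏ k ∈ Finset.range n, ((k : ℂ) - t)) * (1 - w) ^ ((t : ℂ) - n) := by
      filter_upwards [Metric.isOpen_ball.mem_nhds (by simpa using hz : z ∈ Metric.ball (0:ℂ) 1)]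
        with w hw
      exact ih (by simpa using hw)
    rw [hev.deriv_eq]
    have hd : HasDerivAt (fun w => (∏ k ∈ Finset.range n, ((k : ℂ) - t)) * (1 - w) ^ ((t : ℂ) - n))
        ((∏ k ∈ Finset.range n, ((k : ℂ) - t)) * (((t : ℂ) - n) * (1 - z) ^ ((t : ℂ) - n - 1) * (-1))) z :=
      (hasDerivAt_omp ((t : ℂ) - n) hz).const_mul _
    have he : (t : ℂ) - n - 1 = (t : ℂ) - (n + 1 : ℕ) := by push_cast; ring
    rw [hd.deriv, Finset.prod_range_succ, he]
    push_cast
    ring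

noncomputable def bCoef (n : ℕ) (t : ℝ) : ℝ :=
  (∏ k ∈ Finset.range n, ((k : ℝ) - t)) / n.factorial

lemma hasSum_binomial (t : ℝ) {z : ℂ} (hz : ‖z‖ < 1) :
    HasSum (fun n => ((bCoef n t : ℝ) : ℂ) * z ^ n) ((1 - z) ^ (t : ℂ)) := by
  obtain ⟨r, hr1, hzr⟩ : ∃ r : NNReal, (r : ℝ) < 1 ∧ ‖z‖ < r := by
    obtain ⟨r, h1, h2⟩ := exists_between hz
    exact ⟨⟨r, le_trans (norm_nonneg z) h1.le⟩, h2, h1⟩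
  have hr0 : (0 : ℝ) < r := lt_of_le_of_lt (norm_nonneg z) hzr
  have hd : DifferentiableOn ℂ (fun w => (1 - w) ^ (t : ℂ)) (Metric.closedBall (0:ℂ) r) := by
    intro w hw
    have hw1 : ‖w‖ < 1 := lt_of_le_of_lt (by simpa using hw) hr1
    exact ((hasDerivAt_omp (t : ℂ) hw1).differentiableAt).differentiableWithinAt
  have h := hd.hasFPowerSeriesOnBall (by exact_mod_cast hr0)
  set p := cauchyPowerSeries (fun w => (1 - w) ^ (t : ℂ)) 0 r with hp
  have hcoef : ∀ n, p.coeff n = ((bCoef n t : ℝ) : ℂ) := by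
    intro n
    have h1 := h.factorial_smul (1 : ℂ) n
    rw [← iteratedDeriv_eq_iteratedFDeriv, iteratedDeriv_omp t n (by norm_num)] at h1
    have h2 : (n.factorial : ℂ) * p.coeff n = ∏ k ∈ Finset.range n, ((k : ℂ) - t) := by
      have : p n (fun _ => (1 : ℂ)) = p.coeff n := rfl
      rw [this] at h1
      simpa [nsmul_eq_mul] using h1
    have hne : (n.factorial : ℂ) ≠ 0 := by exact_mod_cast n.factorial_ne_zero
    rw [bCoef]
    push_cast
    rw [← h2, mul_div_cancel_left₀ _ hne]
  have hs := h.hasSum (y := z) (by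
    simp only [EMetric.mem_ball, edist_zero_right]
    exact_mod_cast (by exact_mod_cast hzr : ‖z‖₊ < r))
  simp only [zero_add] at hs
  convert hs using 2 with n
  · rfl
  rw [FormalMultilinearSeries.apply_eq_pow_smul_coeff, hcoef, smul_eq_mul, mul_comm]

noncomputable def dCoef (n : ℕ) (t : ℝ) : ℝ :=
  if n = 0 then 0 else -(bCoef n t)

lemma dCoef_eq (n : ℕ) (t : ℝ) :
    dCoef n t = (if n = 0 then 1 else 0) - bCoef n t := by
  rcases eq_or_ne n 0 with h | h <;> simp [dCoef, bCoef, h]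

lemma hasSum_dCoef (t : ℝ) {z : ℂ} (hz : ‖z‖ < 1) :
    HasSum (fun n => ((dCoef n t : ℝ) : ℂ) * z ^ n) (1 - (1 - z) ^ (t : ℂ)) := by
  have h1 : HasSum (fun n => (if n = 0 then (1 : ℂ) else 0) * z ^ n) 1 := by
    have := hasSum_single (f := fun n => (if n = 0 then (1 : ℂ) else 0) * z ^ n) 0
      (fun b hb => by simp [hb])
    simpa using this
  have h2 := h1.sub (hasSum_binomial t hz)
  convert h2 using 2 with n
  · rfl
  rw [dCoef_eq]
  push_cast
  rcases eq_or_ne n 0 with h | h <;> simp [h] <;> ring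

lemma dCoef_bounds (n : ℕ) {t : ℝ} (ht : t ∈ Set.Icc (0 : ℝ) 1) :
    0 ≤ dCoef n t ∧ dCoef n t ≤ 1 := by
  obtain ⟨ht0, ht1⟩ := ht
  cases n with
  | zero => simp [dCoef]
  | succ n =>
    have hprod : (∏ k ∈ Finset.range (n + 1), ((k : ℝ) - t))
        = (∏ k ∈ Finset.range n, (((k : ℝ) + 1) - t)) * (0 - t) := by
      rw [Finset.prod_range_succ']
      congr 1
      · exact Finset.prod_congr rfl fun k _ => by push_cast; ring
      · norm_num
    set P := ∏ k ∈ Finset.range n, (((k : ℝ) + 1) - t) with hP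
    have hP0 : 0 ≤ P := Finset.prod_nonneg fun k _ => by
      have := Nat.cast_nonneg (α := ℝ) k
      linarith
    have hP1 : P ≤ n.factorial := by
      calc P ≤ ∏ k ∈ Finset.range n, ((k : ℝ) + 1) :=
            Finset.prod_le_prod (fun k _ => by
              have := Nat.cast_nonneg (α := ℝ) k
              linarith) (fun k _ => by linarith)
        _ = n.factorial := by
            rw [← Finset.prod_range_add_one_eq_factorial]
            push_cast
            ring
    have hfac : (0 : ℝ) < (n + 1).factorial := by positivity
    have hd : dCoef (n + 1) t = t * P / (n + 1).factorial := by
      simp only [dCoef, Nat.succ_ne_zero, if_false, bCoef, hprod]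
      ring
    constructor
    · rw [hd]; positivity
    · rw [hd]
      rw [div_le_one hfac]
      calc t * P ≤ 1 * (n.factorial : ℝ) := by
            apply mul_le_mul ht1 hP1 hP0 zero_le_one
        _ ≤ ((n + 1).factorial : ℝ) := by
            rw [one_mul]
            exact_mod_cast Nat.factorial_le (Nat.le_succ n)

lemma continuous_dCoef (n : ℕ) : Continuous (fun t => dCoef n t) := by
  cases n with
  | zero => simpa [dCoef] using continuous_const
  | succ n =>
    simp only [dCoef, Nat.succ_ne_zero, if_false, bCoef]
    fun_prop

noncomputable def ccCoef (n : ℕ) : ℝ := ∫ t in (0 : ℝ)..1, dCoef n t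

lemma ccCoef_nonneg (n : ℕ) : 0 ≤ ccCoef n :=
  intervalIntegral.integral_nonneg zero_le_one
    (fun t ht => (dCoef_bounds n ht).1)

lemma ccCoef_le_one (n : ℕ) : ccCoef n ≤ 1 := by
  have : ccCoef n ≤ ∫ _ in (0 : ℝ)..1, (1 : ℝ) :=
    intervalIntegral.integral_mono_on zero_le_one
      ((continuous_dCoef n).intervalIntegrable _ _)
      (intervalIntegrable_const)
      (fun t ht => (dCoef_bounds n ht).2)
  simpa using this

lemma dCoef_succ (m : ℕ) (t : ℝ) :
    dCoef (m + 1) t = t * (∏ k ∈ Finset.range m, (((k : ℝ) + 1) - t)) / (m + 1).factorial := by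
  have hprod : (∏ k ∈ Finset.range (m + 1), ((k : ℝ) - t))
      = (∏ k ∈ Finset.range m, (((k : ℝ) + 1) - t)) * (0 - t) := by
    rw [Finset.prod_range_succ']
    congr 1
    · exact Finset.prod_congr rfl fun k _ => by push_cast; ring
    · norm_num
  simp only [dCoef, Nat.succ_ne_zero, if_false, bCoef, hprod]
  ring

open MeasureTheory in
lemma hasSum_ccCoef {z : ℂ} (hz : ‖z‖ < 1) :
    HasSum (fun n => ((ccCoef n : ℝ) : ℂ) * z ^ n)
      (∫ t in (0 : ℝ)..1, (1 - (1 - z) ^ (t : ℂ))) := by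
  have hcont : ∀ n : ℕ, Continuous (fun t : ℝ => ((dCoef n t : ℝ) : ℂ) * z ^ n) := fun n =>
    (Complex.continuous_ofReal.comp (continuous_dCoef n)).mul continuous_const
  have hint : ∀ n : ℕ, Integrable (fun t : ℝ => ((dCoef n t : ℝ) : ℂ) * z ^ n)
      (volume.restrict (Set.Ioc (0 : ℝ) 1)) := fun n =>
    (hcont n).integrableOn_Ioc
  have hbound : ∀ n : ℕ, (∫ t in Set.Ioc (0 : ℝ) 1, ‖((dCoef n t : ℝ) : ℂ) * z ^ n‖) ≤ ‖z‖ ^ n := by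
    intro n
    have h1 : ∀ t ∈ Set.Ioc (0 : ℝ) 1, ‖((dCoef n t : ℝ) : ℂ) * z ^ n‖ ≤ ‖z‖ ^ n := by
      intro t ht
      have hb := dCoef_bounds n (Set.Ioc_subset_Icc_self ht)
      rw [norm_mul, norm_pow, Complex.norm_real, Real.norm_eq_abs, _root_.abs_of_nonneg hb.1]
      have : dCoef n t * ‖z‖ ^ n ≤ 1 * ‖z‖ ^ n :=
        mul_le_mul_of_nonneg_right hb.2 (by positivity)
      simpa using this
    calc (∫ t in Set.Ioc (0 : ℝ) 1, ‖((dCoef n t : ℝ) : ℂ) * z ^ n‖)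
        ≤ ∫ _ in Set.Ioc (0 : ℝ) 1, ‖z‖ ^ n := by
          apply setIntegral_mono_on ((hint n).norm) (integrableOn_const (by simp))
            measurableSet_Ioc h1
      _ = ‖z‖ ^ n := by simp [Real.volume_Ioc]
  have hsum : Summable fun n : ℕ => ∫ t in Set.Ioc (0 : ℝ) 1, ‖((dCoef n t : ℝ) : ℂ) * z ^ n‖ := by
    apply Summable.of_nonneg_of_le (fun n => integral_nonneg fun t => norm_nonneg _) hbound
    exact summable_geometric_of_lt_one (norm_nonneg z) hz
  have key := MeasureTheory.hasSum_integral_of_summable_integral_norm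
    (μ := volume.restrict (Set.Ioc (0 : ℝ) 1)) hint hsum
  have h2 : (∫ t in Set.Ioc (0 : ℝ) 1, ∑' n : ℕ, ((dCoef n t : ℝ) : ℂ) * z ^ n)
      = ∫ t in (0 : ℝ)..1, (1 - (1 - z) ^ (t : ℂ)) := by
    rw [intervalIntegral.integral_of_le zero_le_one]
    exact integral_congr_ae (Filter.Eventually.of_forall fun t => (hasSum_dCoef t hz).tsum_eq)
  have h3 : ∀ n : ℕ, (∫ t in Set.Ioc (0 : ℝ) 1, ((dCoef n t : ℝ) : ℂ) * z ^ n)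
      = ((ccCoef n : ℝ) : ℂ) * z ^ n := by
    intro n
    rw [integral_mul_const]
    congr 1
    have : (∫ t in Set.Ioc (0 : ℝ) 1, ((dCoef n t : ℝ) : ℂ))
        = (((∫ t in Set.Ioc (0 : ℝ) 1, dCoef n t : ℝ)) : ℂ) := integral_ofReal
    rw [this, ccCoef, intervalIntegral.integral_of_le zero_le_one]
  rw [h2] at key
  convert key using 2 with n
  · rfl
  exact (h3 n).symm

lemma integral_eq_hFun {z : ℂ} (hz : ‖z‖ < 1) :
    (∫ t in (0 : ℝ)..1, (1 - (1 - z) ^ (t : ℂ))) = hFun z := by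
  rcases eq_or_ne z 0 with rfl | hz0
  · simp [hFun]
  · have h1z : (1 : ℂ) - z ≠ 0 := by
      intro h
      rw [sub_eq_zero] at h
      rw [← h] at hz
      simp at hz
    set L := Complex.log (1 - z) with hLdef
    have hexpL : Complex.exp L = 1 - z := Complex.exp_log h1z
    have hL : L ≠ 0 := by
      intro h
      rw [h, Complex.exp_zero] at hexpL
      apply hz0
      have := hexpL.symm
      rwa [sub_eq_self] at this
    have hcpow : ∀ t : ℝ, (1 - z) ^ (t : ℂ) = Complex.exp (L * t) := fun t =>
      Complex.cpow_def_of_ne_zero h1z _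
    have hderiv : ∀ t ∈ Set.uIcc (0 : ℝ) 1,
        HasDerivAt (fun s : ℝ => (s : ℂ) - Complex.exp (L * s) / L)
          (1 - (1 - z) ^ (t : ℂ)) t := by
      intro t _
      have h1 : HasDerivAt (fun s : ℝ => (s : ℂ)) 1 t := by
        simpa using (hasDerivAt_id t).ofReal_comp
      have h2 : HasDerivAt (fun s : ℝ => L * (s : ℂ)) L t := by
        simpa using h1.const_mul L
      have h3 : HasDerivAt (fun s : ℝ => Complex.exp (L * s)) (Complex.exp (L * t) * L) t :=
        h2.cexp
      have h4 := h1.sub (h3.div_const L)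
      convert h4 using 1
      · rfl
      · rfl
      rw [hcpow t]
      field_simp
    have hint : IntervalIntegrable (fun t : ℝ => 1 - (1 - z) ^ (t : ℂ))
        MeasureTheory.volume 0 1 := by
      apply Continuous.intervalIntegrable
      have : Continuous fun t : ℝ => Complex.exp (L * t) :=
        Complex.continuous_exp.comp (continuous_const.mul Complex.continuous_ofReal)
      have heq : (fun t : ℝ => 1 - (1 - z) ^ (t : ℂ)) = fun t : ℝ => 1 - Complex.exp (L * t) := by
        funext t; rw [hcpow t]
      rw [heq]
      exact continuous_const.sub this
    rw [intervalIntegral.integral_eq_sub_of_hasDerivAt hderiv hint]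
    simp only [Complex.ofReal_one, Complex.ofReal_zero, mul_one, mul_zero, Complex.exp_zero,
      hexpL]
    rw [hFun, if_neg hz0, ← hLdef]
    field_simp
    ring

lemma Gamma_prod (m : ℕ) {t : ℝ} (ht : t ∈ Set.Ioo (0 : ℝ) 1) :
    Real.Gamma ((m : ℝ) + 1 - t)
      = (∏ k ∈ Finset.range m, ((k : ℝ) + 1 - t)) * Real.Gamma (1 - t) := by
  induction m with
  | zero => simp
  | succ m ih =>
    have harg : ((m + 1 : ℕ) : ℝ) + 1 - t = ((m : ℝ) + 1 - t) + 1 := by push_cast; ring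
    have hne : (m : ℝ) + 1 - t ≠ 0 := by
      have := Nat.cast_nonneg (α := ℝ) m
      have := ht.2
      intro h; linarith
    rw [harg, Real.Gamma_add_one hne, ih, Finset.prod_range_succ]
    push_cast
    ring

lemma ccCoef_eq_cGreg {n : ℕ} (hn : 1 ≤ n) : ccCoef n = cGreg n := by
  obtain ⟨m, rfl⟩ : ∃ m, n = m + 1 := ⟨n - 1, (Nat.succ_pred_eq_of_pos hn).symm⟩
  rw [ccCoef, cGreg, intervalIntegral.integral_of_le zero_le_one,
    intervalIntegral.integral_of_le zero_le_one,
    MeasureTheory.integral_Ioc_eq_integral_Ioo, MeasureTheory.integral_Ioc_eq_integral_Ioo]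
  apply MeasureTheory.setIntegral_congr_fun measurableSet_Ioo
  intro t ht
  have hG1 : Real.Gamma (((m + 1 : ℕ) : ℝ) + 1) = ((m + 1).factorial : ℝ) :=
    Real.Gamma_nat_eq_factorial (m + 1)
  have harg : ((m + 1 : ℕ) : ℝ) - t = (m : ℝ) + 1 - t := by push_cast; ring
  have hGprod := Gamma_prod m ht
  have hGpos : 0 < Real.Gamma (1 - t) := Real.Gamma_pos_of_pos (by linarith [ht.2])
  have hfac : (0 : ℝ) < ((m + 1).factorial : ℝ) := by positivity
  simp only [dCoef_succ, harg, hGprod, hG1]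
  field_simp

/-- `h` is analytic on the unit disc, its `n`-th Taylor coefficient at `0` equals
`c_n = ∫₀¹ t·Γ(n−t)/(Γ(n+1)·Γ(1−t)) dt` for `n ≥ 1`; in particular all Taylor
coefficients of `h` are nonnegative (real). -/
theorem hFun_taylor_coeff :
    ∃ p : FormalMultilinearSeries ℂ ℂ ℂ, HasFPowerSeriesOnBall hFun p 0 1 ∧
      (∀ n : ℕ, 1 ≤ n → p.coeff n = ((cGreg n : ℝ) : ℂ)) ∧
      (∀ n : ℕ, (p.coeff n).im = 0 ∧ 0 ≤ (p.coeff n).re) := by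
  set c : ℕ → ℂ := fun n => ((ccCoef n : ℝ) : ℂ) with hc
  set p := FormalMultilinearSeries.ofScalars ℂ c with hp
  have happly : ∀ (n : ℕ) (y : ℂ), (p n fun _ => y) = c n * y ^ n := by
    intro n y
    rw [hp, FormalMultilinearSeries.ofScalars_apply_eq, smul_eq_mul]
  have hcoeff : ∀ n, p.coeff n = c n := by
    intro n
    have h1 : p.coeff n = p n fun _ => 1 := rfl
    rw [h1, happly, one_pow, mul_one]
  have hradius : 1 ≤ p.radius := by
    apply ENNReal.le_of_forall_nnreal_lt
    intro r hr
    apply FormalMultilinearSeries.le_radius_of_bound _ 1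
    intro n
    have h1 : ‖p n‖ = ‖c n‖ := FormalMultilinearSeries.ofScalars_norm ℂ c n
    have h2 : ‖c n‖ ≤ 1 := by
      rw [hc]
      simp only [Complex.norm_real, Real.norm_eq_abs, _root_.abs_of_nonneg (ccCoef_nonneg n)]
      exact ccCoef_le_one n
    have h3 : (r : ℝ) ^ n ≤ 1 := by
      apply pow_le_one₀ r.coe_nonneg
      exact_mod_cast hr.le
    calc ‖p n‖ * (r : ℝ) ^ n ≤ 1 * 1 := by
          apply mul_le_mul (h1 ▸ h2) h3 (by positivity) zero_le_one
      _ = 1 := by ring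
  refine ⟨p, ⟨hradius, by norm_num, ?_⟩, ?_, ?_⟩
  · intro y hy
    have hy' : ‖y‖ < 1 := by
      have h1 : (‖y‖₊ : ℝ≥0∞) < 1 := by rw [← enorm_eq_nnnorm]; simpa using hy
      exact_mod_cast ENNReal.coe_lt_one_iff.mp h1
    rw [zero_add]
    have := hasSum_ccCoef hy'
    rw [integral_eq_hFun hy'] at this
    convert this using 2 with n
    · rfl
    rw [happly]
  · intro n hn
    rw [hcoeff]
    simp only [hc]
    rw [ccCoef_eq_cGreg hn]
  · intro n
    rw [hcoeff]
    simp only [hc]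
    simp [ccCoef_nonneg n]
end
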